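/- arXiv:2010.10559 — 11 statements merged into one kernel-verified Lean document; each statement's English description precedes it below -/
import Mathlib

section
/- For the (1D1B) setup, define the Lyapunov function V(p₁,p₂) = (K_d/4)·e₁₂d² + (K_b/2)·d₁₂·‖e₁₂b‖² and the closed-loop vector field F(p₁,p₂) = (K_d·e₁₂d·z₁₂, −K_b·e₁₂b) on ℝ² × ℝ². Then at every point (p₁,p₂) with p₁ ≠ p₂, V is differentiable and its derivative at (p₁,p₂) applied to the direction F(p₁,p₂) equals −‖K_b·e₁₂b + K_d·e₁₂d·z₁₂‖², which is ≤ 0; i.e., along the closed-loop dynamics V̇ = −‖ż₁₂‖². -/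
theorem my_hasFDerivAt_norm {E : Type*} [NormedAddCommGroup E] [InnerProductSpace ℝ E]
    (x : E) (hx : x ≠ 0) :
    HasFDerivAt (fun y : E => ‖y‖) (‖x‖⁻¹ • innerSL ℝ x) x := by
  have hn : (0:ℝ) < ‖x‖ := norm_pos_iff.mpr hx
  have h1 : HasFDerivAt (fun y : E => ‖y‖ ^ 2) (2 • innerSL ℝ x) x :=
    (hasFDerivAt_id x).norm_sq
  have h2 : HasDerivAt Real.sqrt (1 / (2 * Real.sqrt (‖x‖ ^ 2))) (‖x‖ ^ 2) :=
    Real.hasDerivAt_sqrt (by positivity)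
  have h3 := h2.comp_hasFDerivAt x h1
  have heq : (Real.sqrt ∘ fun y : E => ‖y‖ ^ 2) = fun y : E => ‖y‖ := by
    funext y; simp [Real.sqrt_sq (norm_nonneg y)]
  rw [heq] at h3
  refine h3.congr_fderiv ?_
  rw [Real.sqrt_sq (norm_nonneg x)]
  ext y
  simp only [ContinuousLinearMap.smul_apply, ContinuousLinearMap.coe_smul', Pi.smul_apply,
    smul_eq_mul, one_div]
  field_simp
  ring

private abbrev Q : Type := EuclideanSpace ℝ (Fin 2) × EuclideanSpace ℝ (Fin 2)

set_option maxHeartbeats 1000000 in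
/-- the Lyapunov function of the (1D1B) setup is differentiable
away from collisions and its derivative along the closed-loop vector field
equals `−‖ż₁₂‖² = −‖K_b·e₁₂b + K_d·e₁₂d·z₁₂‖² ≤ 0`. -/
theorem stmt_3 (Kd Kb dstar : ℝ) (hKd : 0 < Kd) (hKb : 0 < Kb) (hdstar : 0 < dstar)
    (gstar : EuclideanSpace ℝ (Fin 2)) (hgstar : ‖gstar‖ = 1)
    (V : EuclideanSpace ℝ (Fin 2) × EuclideanSpace ℝ (Fin 2) → ℝ)
    (hV : V = fun q =>
      (Kd / 4) * (‖q.2 - q.1‖ ^ 2 - dstar ^ 2) ^ 2 +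
      (Kb / 2) * ‖q.2 - q.1‖ * ‖‖q.2 - q.1‖⁻¹ • (q.2 - q.1) - gstar‖ ^ 2)
    (F : EuclideanSpace ℝ (Fin 2) × EuclideanSpace ℝ (Fin 2) →
      EuclideanSpace ℝ (Fin 2) × EuclideanSpace ℝ (Fin 2))
    (hF : F = fun q =>
      ((Kd * (‖q.2 - q.1‖ ^ 2 - dstar ^ 2)) • (q.2 - q.1),
       (-Kb) • (‖q.2 - q.1‖⁻¹ • (q.2 - q.1) - gstar)))
    (p₁ p₂ : EuclideanSpace ℝ (Fin 2)) (hp : p₁ ≠ p₂) :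
    DifferentiableAt ℝ V (p₁, p₂) ∧
    fderiv ℝ V (p₁, p₂) (F (p₁, p₂)) =
      -‖Kb • (‖p₂ - p₁‖⁻¹ • (p₂ - p₁) - gstar) +
        (Kd * (‖p₂ - p₁‖ ^ 2 - dstar ^ 2)) • (p₂ - p₁)‖ ^ 2 ∧
    fderiv ℝ V (p₁, p₂) (F (p₁, p₂)) ≤ 0 := by
  have hz : p₂ - p₁ ≠ 0 := sub_ne_zero.mpr hp.symm
  have hnz : (0:ℝ) < ‖p₂ - p₁‖ := norm_pos_iff.mpr hz
  set W : Q → ℝ := fun q =>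
    (Kd / 4) * (‖q.2 - q.1‖ ^ 2 - dstar ^ 2) ^ 2 + Kb * ‖q.2 - q.1‖
      - Kb * (inner ℝ gstar (q.2 - q.1) : ℝ) with hW
  -- V = W near p
  have hopen : IsOpen {q : Q | q.2 - q.1 ≠ 0} :=
    isOpen_compl_singleton.preimage (continuous_snd.sub continuous_fst)
  have hmem : {q : Q | q.2 - q.1 ≠ 0} ∈ nhds ((p₁, p₂) : Q) := hopen.mem_nhds hz
  have hVW : V =ᶠ[nhds ((p₁, p₂) : Q)] W := by
    filter_upwards [hmem] with q hq
    have hq' : (0:ℝ) < ‖q.2 - q.1‖ := norm_pos_iff.mpr hq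
    simp only [hV, hW]
    have h1 : ‖‖q.2 - q.1‖⁻¹ • (q.2 - q.1) - gstar‖ ^ 2
        = 2 - 2 * ‖q.2 - q.1‖⁻¹ * (inner ℝ (q.2 - q.1) gstar : ℝ) := by
      rw [norm_sub_sq_real, norm_smul, real_inner_smul_left, hgstar]
      rw [norm_inv, norm_norm]
      field_simp
      ring
    rw [h1, real_inner_comm gstar]
    field_simp
    ring
  -- derivative of W
  set L : Q →L[ℝ] EuclideanSpace ℝ (Fin 2) :=
    ContinuousLinearMap.snd ℝ _ _ - ContinuousLinearMap.fst ℝ _ _ with hLdef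
  have hLapp : ∀ a : Q, L a = a.2 - a.1 := fun a => rfl
  have hL : HasFDerivAt (fun q : Q => q.2 - q.1) L ((p₁, p₂) : Q) := by
    have := L.hasFDerivAt (x := ((p₁, p₂) : Q))
    exact this.congr_fderiv rfl
  have hns : HasFDerivAt (fun q : Q => ‖q.2 - q.1‖ ^ 2)
      (2 • (innerSL ℝ (p₂ - p₁)).comp L) ((p₁, p₂) : Q) := hL.norm_sq
  have hed : HasFDerivAt (fun q : Q => ‖q.2 - q.1‖ ^ 2 - dstar ^ 2)
      (2 • (innerSL ℝ (p₂ - p₁)).comp L) ((p₁, p₂) : Q) := hns.sub_const _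
  have hed2 : HasFDerivAt (fun q : Q => (‖q.2 - q.1‖ ^ 2 - dstar ^ 2) ^ 2)
      ((2 * (‖p₂ - p₁‖ ^ 2 - dstar ^ 2)) • (2 • (innerSL ℝ (p₂ - p₁)).comp L))
      ((p₁, p₂) : Q) := by
    have h := hed.mul hed
    have heq : ((fun q : Q => (‖q.2 - q.1‖ ^ 2 - dstar ^ 2)) * (fun q : Q => ‖q.2 - q.1‖ ^ 2 - dstar ^ 2))
        = fun q : Q => (‖q.2 - q.1‖ ^ 2 - dstar ^ 2) ^ 2 := by
      funext q; simp only [Pi.mul_apply]; ring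
    rw [heq] at h
    refine h.congr_fderiv ?_
    module
  have hnorm : HasFDerivAt (fun q : Q => ‖q.2 - q.1‖)
      ((‖p₂ - p₁‖⁻¹ • innerSL ℝ (p₂ - p₁)).comp L) ((p₁, p₂) : Q) :=
    (my_hasFDerivAt_norm (p₂ - p₁) hz).comp ((p₁, p₂) : Q) hL
  have hinner : HasFDerivAt (fun q : Q => (inner ℝ gstar (q.2 - q.1) : ℝ))
      ((innerSL ℝ gstar).comp L) ((p₁, p₂) : Q) :=
    ((innerSL ℝ gstar).hasFDerivAt).comp ((p₁, p₂) : Q) hL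
  have hWd : HasFDerivAt W
      ((Kd / 4) • ((2 * (‖p₂ - p₁‖ ^ 2 - dstar ^ 2)) • (2 • (innerSL ℝ (p₂ - p₁)).comp L))
        + Kb • ((‖p₂ - p₁‖⁻¹ • innerSL ℝ (p₂ - p₁)).comp L)
        - Kb • ((innerSL ℝ gstar).comp L)) ((p₁, p₂) : Q) :=
    ((hed2.const_smul (Kd / 4)).add (hnorm.const_smul Kb)).sub (hinner.const_smul Kb)
  have hdiff : DifferentiableAt ℝ V ((p₁, p₂) : Q) :=
    hWd.differentiableAt.congr_of_eventuallyEq hVW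
  have hfd : fderiv ℝ V ((p₁, p₂) : Q) = fderiv ℝ W ((p₁, p₂) : Q) := hVW.fderiv_eq
  have key : fderiv ℝ V ((p₁, p₂) : Q) (F ((p₁, p₂) : Q)) =
      -‖Kb • (‖p₂ - p₁‖⁻¹ • (p₂ - p₁) - gstar) +
        (Kd * (‖p₂ - p₁‖ ^ 2 - dstar ^ 2)) • (p₂ - p₁)‖ ^ 2 := by
    rw [hfd, hWd.fderiv, hF]
    simp only [ContinuousLinearMap.sub_apply, ContinuousLinearMap.add_apply,
      ContinuousLinearMap.smul_apply, ContinuousLinearMap.coe_comp', Function.comp_apply,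
      ContinuousLinearMap.coe_smul', Pi.smul_apply, hLapp, innerSL_apply_apply, smul_eq_mul]
    show (Kd / 4) * ((2 * (‖p₂ - p₁‖ ^ 2 - dstar ^ 2)) • (2 •
        (inner ℝ (p₂ - p₁) (((-Kb) • (‖p₂ - p₁‖⁻¹ • (p₂ - p₁) - gstar))
          - (Kd * (‖p₂ - p₁‖ ^ 2 - dstar ^ 2)) • (p₂ - p₁)) : ℝ)))
      + Kb * (‖p₂ - p₁‖⁻¹ •
        (inner ℝ (p₂ - p₁) (((-Kb) • (‖p₂ - p₁‖⁻¹ • (p₂ - p₁) - gstar))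
          - (Kd * (‖p₂ - p₁‖ ^ 2 - dstar ^ 2)) • (p₂ - p₁)) : ℝ))
      - Kb * (inner ℝ gstar (((-Kb) • (‖p₂ - p₁‖⁻¹ • (p₂ - p₁) - gstar))
          - (Kd * (‖p₂ - p₁‖ ^ 2 - dstar ^ 2)) • (p₂ - p₁)) : ℝ)
      = -‖Kb • (‖p₂ - p₁‖⁻¹ • (p₂ - p₁) - gstar) +
          (Kd * (‖p₂ - p₁‖ ^ 2 - dstar ^ 2)) • (p₂ - p₁)‖ ^ 2
    set z₀ : EuclideanSpace ℝ (Fin 2) := p₂ - p₁ with hz₀d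
    rw [show -‖Kb • (‖z₀‖⁻¹ • z₀ - gstar) + (Kd * (‖z₀‖ ^ 2 - dstar ^ 2)) • z₀‖ ^ 2
        = -(inner ℝ (Kb • (‖z₀‖⁻¹ • z₀ - gstar) + (Kd * (‖z₀‖ ^ 2 - dstar ^ 2)) • z₀)
            (Kb • (‖z₀‖⁻¹ • z₀ - gstar) + (Kd * (‖z₀‖ ^ 2 - dstar ^ 2)) • z₀) : ℝ)
      from by rw [real_inner_self_eq_norm_sq]]
    have hzz : (inner ℝ z₀ z₀ : ℝ) = ‖z₀‖ ^ 2 := real_inner_self_eq_norm_sq _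
    have hgg : (inner ℝ gstar gstar : ℝ) = 1 := by
      rw [real_inner_self_eq_norm_sq, hgstar]; norm_num
    simp only [inner_add_left, inner_add_right, inner_sub_left, inner_sub_right,
      real_inner_smul_left, real_inner_smul_right, smul_eq_mul, nsmul_eq_mul]
    rw [real_inner_comm gstar z₀, hzz, hgg]
    have hne : ‖z₀‖ ≠ 0 := ne_of_gt hnz
    field_simp
    ring
  refine ⟨hdiff, key, ?_⟩
  rw [key]
  exact neg_nonpos.mpr (by positivity)
end

section
/- In the (1D1B) setup, suppose the link is stationary, i.e. K_b·e₁₂b + K_d·e₁₂d·z₁₂ = 0. Then exactly one of the following holds: (i) g₁₂ = g₁₂* and e₁₂d = 0 (an equilibrium configuration), or (ii) g₁₂ = −g₁₂* and d₁₂·e₁₂d = −2K_b/K_d; moreover, in case (ii) both robots move with the common constant velocity w = 2K_b·g₁₂*, that is, K_d·e₁₂d·z₁₂ = 2K_b·g₁₂* = −K_b·e₁₂b. -/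
/-- if the (1D1B) link is stationary, then exactly one of the
following holds: (i) it is an equilibrium configuration, or (ii) it is a moving
configuration, in which case both robots move with velocity `w = 2K_b·g₁₂*`. -/
theorem stmt_4 (Kd Kb dstar : ℝ) (hKd : 0 < Kd) (hKb : 0 < Kb) (hdstar : 0 < dstar)
    (gstar : EuclideanSpace ℝ (Fin 2)) (hgstar : ‖gstar‖ = 1)
    (p₁ p₂ : EuclideanSpace ℝ (Fin 2)) (hp : p₁ ≠ p₂)
    (z : EuclideanSpace ℝ (Fin 2)) (hz : z = p₂ - p₁)
    (d : ℝ) (hd : d = ‖z‖)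
    (g : EuclideanSpace ℝ (Fin 2)) (hgg : g = d⁻¹ • z)
    (ed : ℝ) (hed : ed = d ^ 2 - dstar ^ 2)
    (eb : EuclideanSpace ℝ (Fin 2)) (heb : eb = g - gstar)
    (hstat : Kb • eb + (Kd * ed) • z = 0) :
    Xor' (g = gstar ∧ ed = 0)
      (g = -gstar ∧ d * ed = -(2 * Kb) / Kd ∧
        (Kd * ed) • z = (2 * Kb) • gstar ∧ (Kd * ed) • z = (-Kb) • eb) := by
  have hzne : z ≠ 0 := by
    rw [hz, sub_ne_zero]; exact fun h => hp h.symm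
  have hdpos : 0 < d := by rw [hd]; exact norm_pos_iff.mpr hzne
  have hzdg : z = d • g := by
    rw [hgg, smul_smul, mul_inv_cancel₀ hdpos.ne', one_smul]
  have hgnorm : ‖g‖ = 1 := by
    rw [hgg, norm_smul, norm_inv, Real.norm_eq_abs, abs_of_pos hdpos, ← hd,
      inv_mul_cancel₀ hdpos.ne']
  have key : (Kb + Kd * ed * d) • g = Kb • gstar := by
    rw [heb, hzdg] at hstat
    linear_combination (norm := module) hstat
  have habs : |Kb + Kd * ed * d| = Kb := by
    have := congrArg norm key
    rwa [norm_smul, norm_smul, hgnorm, hgstar, mul_one, mul_one, Real.norm_eq_abs,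
      Real.norm_eq_abs, abs_of_pos hKb] at this
  rcases (abs_eq hKb.le).mp habs with hc | hc
  · -- equilibrium case
    have hed0 : ed = 0 := by
      have h1 : Kd * ed * d = 0 := by linarith
      rcases mul_eq_zero.mp h1 with h2 | h2
      · rcases mul_eq_zero.mp h2 with h3 | h3
        · exact absurd h3 hKd.ne'
        · exact h3
      · exact absurd h2 hdpos.ne'
    have hgeq : g = gstar := by
      have : Kb • g = Kb • gstar := by
        rw [← key, hed0]; ring_nf
      exact smul_right_injective _ hKb.ne' this
    left
    refine ⟨⟨hgeq, hed0⟩, ?_⟩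
    rintro ⟨hgneg, -⟩
    have : gstar = 0 := by
      have h2 : (2 : ℝ) • gstar = 0 := by
        have := hgeq.symm.trans hgneg
        linear_combination (norm := module) this
      have := smul_eq_zero.mp h2
      simpa using this
    rw [this, norm_zero] at hgstar
    norm_num at hgstar
  · -- moving case
    have hmul : Kd * ed * d = -(2 * Kb) := by linarith
    have hedne : ed ≠ 0 := by
      intro h
      rw [h] at hmul
      simp at hmul
      linarith
    have hgeq : g = -gstar := by
      rw [hc] at key
      have h1 : Kb • g = Kb • (-gstar) := by
        linear_combination (norm := module) (-1 : ℝ) • key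
      exact smul_right_injective _ hKb.ne' h1
    right
    refine ⟨⟨hgeq, ?_, ?_, ?_⟩, ?_⟩
    · field_simp
      linarith [hmul]
    · rw [hzdg, hgeq, smul_smul]
      rw [show Kd * ed * d = -(2 * Kb) from hmul]
      module
    · rw [hzdg, hgeq, heb, hgeq, smul_smul,
        show Kd * ed * d = -(2 * Kb) from hmul]
      module
    · rintro ⟨-, hed0⟩
      exact hedne hed0
end

section
/- Let K_b, K_d > 0, let d > 0, and let g ∈ ℝ² be a unit vector (‖g‖ = 1). Consider the 2×2 real matrix A = −(K_b·(1/d)·(I₂ − g·gᵀ) + K_d·(e_d·I₂ + 2·z·zᵀ)) where z = d·g and e_d = −2·(K_b/K_d)/d (this is the Jacobian of the (1D1B) link dynamics at a point of the moving set, where g₁₂ = −g₁₂* and d₁₂·e₁₂d = −2K_b/K_d). Then the eigenvalues of A are λ₁ = K_b/d and λ₂ = 2·K_b/d − 2·K_d·d²; in particular A has the positive eigenvalue K_b/d > 0, so the linearization at every point of the moving set is unstable. -/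
open Polynomial

/-- the Jacobian of the (1D1B) link dynamics at a point of the
moving set has eigenvalues `K_b/d` and `2K_b/d − 2K_d·d²`; in particular it has
the positive eigenvalue `K_b/d`, so the moving set is unstable. -/
theorem stmt_5 (Kd Kb d : ℝ) (hKd : 0 < Kd) (hKb : 0 < Kb) (hd : 0 < d)
    (g : Fin 2 → ℝ) (hg : g 0 ^ 2 + g 1 ^ 2 = 1)
    (z : Fin 2 → ℝ) (hz : z = d • g)
    (ed : ℝ) (hed : ed = -(2 * (Kb / Kd)) / d)
    (A : Matrix (Fin 2) (Fin 2) ℝ)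
    (hA : A = -((Kb * (1 / d)) • ((1 : Matrix (Fin 2) (Fin 2) ℝ) - Matrix.vecMulVec g g) +
        Kd • (ed • (1 : Matrix (Fin 2) (Fin 2) ℝ) + (2 : ℝ) • Matrix.vecMulVec z z))) :
    A.charpoly = (X - C (Kb / d)) * (X - C (2 * Kb / d - 2 * Kd * d ^ 2)) ∧
    0 < Kb / d := by
  have hA' : A = (Kb / d) • (1 : Matrix (Fin 2) (Fin 2) ℝ) +
      (Kb / d - 2 * Kd * d ^ 2) • Matrix.vecMulVec g g := by
    subst hA hz hed
    ext i j
    fin_cases i <;> fin_cases j <;>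
      simp [Matrix.vecMulVec, Matrix.one_apply] <;>
      field_simp <;> ring
  have key : A.charpoly = X ^ 2 - C A.trace * X + C A.det := by
    rw [Matrix.charpoly, Matrix.det_fin_two, Matrix.trace_fin_two, Matrix.det_fin_two]
    rw [Matrix.charmatrix_apply_eq, Matrix.charmatrix_apply_eq,
      Matrix.charmatrix_apply_ne _ _ _ (by decide), Matrix.charmatrix_apply_ne _ _ _ (by decide)]
    simp only [map_add, map_mul, map_sub]
    ring
  have htr : A.trace = (Kb / d) + (2 * Kb / d - 2 * Kd * d ^ 2) := by
    simp only [hA', Matrix.trace_fin_two, Matrix.add_apply, Matrix.smul_apply,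
      Matrix.one_apply, Matrix.vecMulVec_apply, smul_eq_mul]
    norm_num
    linear_combination (Kb / d - 2 * Kd * d ^ 2) * hg
  have hdet : A.det = (Kb / d) * (2 * Kb / d - 2 * Kd * d ^ 2) := by
    simp only [hA', Matrix.det_fin_two, Matrix.add_apply, Matrix.smul_apply,
      Matrix.one_apply, Matrix.vecMulVec_apply, smul_eq_mul]
    norm_num
    linear_combination (Kb / d) * (Kb / d - 2 * Kd * d ^ 2) * hg
  refine ⟨?_, by positivity⟩
  rw [key, htr, hdet, C_add, C_mul]
  ring
end

section
/- In the (1D2B) setup, the closed-loop system is at an equilibrium if and only if all errors vanish; precisely: K_d·e₁₂d·z₁₂ + K_d·e₁₃d·z₁₃ = 0, −K_b·e₁₂b = 0 and −K_b·e₁₃b = 0 hold simultaneously if and only if e₁₂d = 0, e₁₃d = 0, g₁₂ = g₁₂* and g₁₃ = g₁₃*. -/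
/-- Two unit vectors that are neither equal nor opposite: a vanishing
linear combination has zero coefficients. -/
lemma unit_indep (u v : EuclideanSpace ℝ (Fin 2)) (hu : ‖u‖ = 1) (hv : ‖v‖ = 1)
    (h1 : u ≠ v) (h2 : u ≠ -v) (a b : ℝ) (hab : a • u + b • v = 0) :
    a = 0 ∧ b = 0 := by
  have hvne : v ≠ 0 := by intro h; rw [h, norm_zero] at hv; norm_num at hv
  by_cases ha : a = 0
  · subst ha
    simp only [zero_smul, zero_add] at hab
    rcases smul_eq_zero.mp hab with hb | hv0
    · exact ⟨rfl, hb⟩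
    · exact absurd hv0 hvne
  · exfalso
    have hu' : u = (-(b / a)) • v := by
      have : a • u = (-b) • v := by
        have := hab
        rw [add_eq_zero_iff_eq_neg] at this
        rw [this, neg_smul]
      calc u = a⁻¹ • (a • u) := by rw [smul_smul, inv_mul_cancel₀ ha, one_smul]
        _ = a⁻¹ • ((-b) • v) := by rw [this]
        _ = (-(b / a)) • v := by rw [smul_smul]; congr 1; field_simp
    have habs : |(-(b / a))| = 1 := by
      have := congrArg norm hu'
      rw [norm_smul, hv, hu, Real.norm_eq_abs, mul_one] at this
      exact this.symm
    rcases abs_eq (by norm_num : (0:ℝ) ≤ 1) |>.mp habs with h | h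
    · rw [h, one_smul] at hu'; exact h1 hu'
    · rw [h, neg_one_smul] at hu'; exact h2 hu'

/-- equilibria of the (1D2B) closed loop are exactly the
configurations where all distance and bearing errors vanish. -/
theorem stmt_8 (Kd Kb d12s d13s : ℝ) (hKd : 0 < Kd) (hKb : 0 < Kb)
    (hd12s : 0 < d12s) (hd13s : 0 < d13s)
    (g12s g13s : EuclideanSpace ℝ (Fin 2))
    (hg12s : ‖g12s‖ = 1) (hg13s : ‖g13s‖ = 1)
    (hne : g12s ≠ g13s) (hne' : g12s ≠ -g13s)
    (p₁ p₂ p₃ : EuclideanSpace ℝ (Fin 2)) (hp12 : p₁ ≠ p₂) (hp13 : p₁ ≠ p₃)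
    (z12 z13 : EuclideanSpace ℝ (Fin 2)) (hz12 : z12 = p₂ - p₁) (hz13 : z13 = p₃ - p₁)
    (d12 d13 : ℝ) (hd12 : d12 = ‖z12‖) (hd13 : d13 = ‖z13‖)
    (g12 g13 : EuclideanSpace ℝ (Fin 2)) (hg12 : g12 = d12⁻¹ • z12) (hg13 : g13 = d13⁻¹ • z13)
    (e12d e13d : ℝ) (he12d : e12d = d12 ^ 2 - d12s ^ 2) (he13d : e13d = d13 ^ 2 - d13s ^ 2)
    (e12b e13b : EuclideanSpace ℝ (Fin 2))
    (he12b : e12b = g12 - g12s) (he13b : e13b = g13 - g13s) :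
    ((Kd * e12d) • z12 + (Kd * e13d) • z13 = 0 ∧ (-Kb) • e12b = 0 ∧ (-Kb) • e13b = 0) ↔
      (e12d = 0 ∧ e13d = 0 ∧ g12 = g12s ∧ g13 = g13s) := by
  have hz12ne : z12 ≠ 0 := by rw [hz12]; exact sub_ne_zero.mpr (Ne.symm hp12)
  have hz13ne : z13 ≠ 0 := by rw [hz13]; exact sub_ne_zero.mpr (Ne.symm hp13)
  have hn12 : (0:ℝ) < d12 := hd12 ▸ norm_pos_iff.mpr hz12ne
  have hn13 : (0:ℝ) < d13 := hd13 ▸ norm_pos_iff.mpr hz13ne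
  have hKb' : (-Kb : ℝ) ≠ 0 := neg_ne_zero.mpr hKb.ne'
  constructor
  · rintro ⟨h1, h2, h3⟩
    have hb2 : g12 = g12s := by
      rcases smul_eq_zero.mp h2 with h | h
      · exact absurd h hKb'
      · rw [he12b] at h; exact sub_eq_zero.mp h
    have hb3 : g13 = g13s := by
      rcases smul_eq_zero.mp h3 with h | h
      · exact absurd h hKb'
      · rw [he13b] at h; exact sub_eq_zero.mp h
    have hz12' : z12 = d12 • g12s := by
      rw [← hb2, hg12, smul_smul, mul_inv_cancel₀ hn12.ne', one_smul]
    have hz13' : z13 = d13 • g13s := by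
      rw [← hb3, hg13, smul_smul, mul_inv_cancel₀ hn13.ne', one_smul]
    rw [hz12', hz13', smul_smul, smul_smul] at h1
    obtain ⟨ha, hb⟩ := unit_indep g12s g13s hg12s hg13s hne hne' _ _ h1
    have he12 : e12d = 0 := by
      rcases mul_eq_zero.mp ha with h | h
      · rcases mul_eq_zero.mp h with h' | h'
        · exact absurd h' hKd.ne'
        · exact h'
      · exact absurd h hn12.ne'
    have he13 : e13d = 0 := by
      rcases mul_eq_zero.mp hb with h | h
      · rcases mul_eq_zero.mp h with h' | h'
        · exact absurd h' hKd.ne'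
        · exact h'
      · exact absurd h hn13.ne'
    exact ⟨he12, he13, hb2, hb3⟩
  · rintro ⟨h1, h2, h3, h4⟩
    refine ⟨?_, ?_, ?_⟩
    · rw [h1, h2]; simp
    · rw [he12b, h3]; simp
    · rw [he13b, h4]; simp
end

section
/- In the (1D2B) setup, suppose both links are stationary, i.e. K_b·e₁₂b + K_d·e₁₂d·z₁₂ + K_d·e₁₃d·z₁₃ = 0 and K_b·e₁₃b + K_d·e₁₂d·z₁₂ + K_d·e₁₃d·z₁₃ = 0. Then exactly one of the following holds: (i) e₁₂d = 0, e₁₃d = 0, g₁₂ = g₁₂* and g₁₃ = g₁₃* (an equilibrium configuration), or (ii) g₁₂ = −g₁₃*, g₁₃ = −g₁₂*, d₁₂·e₁₂d = −K_b/K_d and d₁₃·e₁₃d = −K_b/K_d; moreover, in case (ii) all three robots move with the common constant velocity w = K_b·(g₁₂* + g₁₃*). -/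
open scoped InnerProductSpace

/-- if both links of the (1D2B) setup are stationary, then
exactly one of the following holds: (i) equilibrium configuration, or
(ii) moving configuration, in which case all three robots move with the common
constant velocity `w = K_b·(g₁₂* + g₁₃*)`. -/
theorem stmt_9 (Kd Kb d12s d13s : ℝ) (hKd : 0 < Kd) (hKb : 0 < Kb)
    (hd12s : 0 < d12s) (hd13s : 0 < d13s)
    (g12s g13s : EuclideanSpace ℝ (Fin 2))
    (hg12s : ‖g12s‖ = 1) (hg13s : ‖g13s‖ = 1)
    (hne : g12s ≠ g13s) (hne' : g12s ≠ -g13s)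
    (p₁ p₂ p₃ : EuclideanSpace ℝ (Fin 2)) (hp12 : p₁ ≠ p₂) (hp13 : p₁ ≠ p₃)
    (z12 z13 : EuclideanSpace ℝ (Fin 2)) (hz12 : z12 = p₂ - p₁) (hz13 : z13 = p₃ - p₁)
    (d12 d13 : ℝ) (hd12 : d12 = ‖z12‖) (hd13 : d13 = ‖z13‖)
    (g12 g13 : EuclideanSpace ℝ (Fin 2)) (hg12 : g12 = d12⁻¹ • z12) (hg13 : g13 = d13⁻¹ • z13)
    (e12d e13d : ℝ) (he12d : e12d = d12 ^ 2 - d12s ^ 2) (he13d : e13d = d13 ^ 2 - d13s ^ 2)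
    (e12b e13b : EuclideanSpace ℝ (Fin 2))
    (he12b : e12b = g12 - g12s) (he13b : e13b = g13 - g13s)
    (hstat12 : Kb • e12b + (Kd * e12d) • z12 + (Kd * e13d) • z13 = 0)
    (hstat13 : Kb • e13b + (Kd * e12d) • z12 + (Kd * e13d) • z13 = 0) :
    Xor' (e12d = 0 ∧ e13d = 0 ∧ g12 = g12s ∧ g13 = g13s)
      (g12 = -g13s ∧ g13 = -g12s ∧
        d12 * e12d = -Kb / Kd ∧ d13 * e13d = -Kb / Kd ∧
        (Kd * e12d) • z12 + (Kd * e13d) • z13 = Kb • (g12s + g13s) ∧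
        (-Kb) • e12b = Kb • (g12s + g13s) ∧
        (-Kb) • e13b = Kb • (g12s + g13s)) := by
  have hz12ne : z12 ≠ 0 := by
    rw [hz12, sub_ne_zero]; exact fun h => hp12 h.symm
  have hz13ne : z13 ≠ 0 := by
    rw [hz13, sub_ne_zero]; exact fun h => hp13 h.symm
  have hd12pos : 0 < d12 := by rw [hd12]; exact norm_pos_iff.mpr hz12ne
  have hd13pos : 0 < d13 := by rw [hd13]; exact norm_pos_iff.mpr hz13ne
  have hz12eq : z12 = d12 • g12 := by
    rw [hg12, smul_smul, mul_inv_cancel₀ hd12pos.ne', one_smul]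
  have hz13eq : z13 = d13 • g13 := by
    rw [hg13, smul_smul, mul_inv_cancel₀ hd13pos.ne', one_smul]
  have hng12 : ‖g12‖ = 1 := by
    rw [hg12, norm_smul, Real.norm_eq_abs, abs_of_pos (inv_pos.mpr hd12pos), ← hd12,
      inv_mul_cancel₀ hd12pos.ne']
  have hng13 : ‖g13‖ = 1 := by
    rw [hg13, norm_smul, Real.norm_eq_abs, abs_of_pos (inv_pos.mpr hd13pos), ← hd13,
      inv_mul_cancel₀ hd13pos.ne']
  obtain ⟨a, ha_def⟩ : ∃ a : ℝ, a = Kd * (d12 * e12d) := ⟨_, rfl⟩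
  obtain ⟨b, hb_def⟩ : ∃ b : ℝ, b = Kd * (d13 * e13d) := ⟨_, rfl⟩
  have hv12 : (Kd * e12d) • z12 = a • g12 := by
    rw [hz12eq, smul_smul]; congr 1; rw [ha_def]; ring
  have hv13 : (Kd * e13d) • z13 = b • g13 := by
    rw [hz13eq, smul_smul]; congr 1; rw [hb_def]; ring
  rw [hv12, hv13, he12b] at hstat12
  rw [hv12, hv13, he13b] at hstat13
  have E1 : (a + Kb) • g12 + b • g13 = Kb • g12s := by
    linear_combination (norm := module) hstat12
  have E2 : a • g12 + (b + Kb) • g13 = Kb • g13s := by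
    linear_combination (norm := module) hstat13
  obtain ⟨t, ht_def⟩ : ∃ t : ℝ, t = ⟪g12, g13⟫_ℝ := ⟨_, rfl⟩
  obtain ⟨s, hs_def⟩ : ∃ s : ℝ, s = ⟪g12s, g13s⟫_ℝ := ⟨_, rfl⟩
  have i12 : ⟪g12, g12⟫_ℝ = 1 := by rw [real_inner_self_eq_norm_sq, hng12]; norm_num
  have i13 : ⟪g13, g13⟫_ℝ = 1 := by rw [real_inner_self_eq_norm_sq, hng13]; norm_num
  have i12s : ⟪g12s, g12s⟫_ℝ = 1 := by rw [real_inner_self_eq_norm_sq, hg12s]; norm_num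
  have i13s : ⟪g13s, g13s⟫_ℝ = 1 := by rw [real_inner_self_eq_norm_sq, hg13s]; norm_num
  have i1312 : ⟪g13, g12⟫_ℝ = t := by rw [ht_def]; exact real_inner_comm g12 g13
  have i13s12s : ⟪g13s, g12s⟫_ℝ = s := by rw [hs_def]; exact real_inner_comm g12s g13s
  have N1 := congrArg (fun w => ⟪w, w⟫_ℝ) E1
  simp only [inner_add_left, inner_add_right, real_inner_smul_left, real_inner_smul_right,
    i12, i13, i12s, i13s, i1312, i13s12s, ← ht_def, ← hs_def, mul_one] at N1
  have N2 := congrArg (fun w => ⟪w, w⟫_ℝ) E2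
  simp only [inner_add_left, inner_add_right, real_inner_smul_left, real_inner_smul_right,
    i12, i13, i12s, i13s, i1312, i13s12s, ← ht_def, ← hs_def, mul_one] at N2
  have Ediff : Kb • (g12 - g13) = Kb • (g12s - g13s) := by
    linear_combination (norm := module) E1 - E2
  have key : (a - b) * (1 - t) = 0 := by
    have h : 2 * Kb * ((a - b) * (1 - t)) = 0 := by linear_combination N1 - N2
    have h2 : (2 : ℝ) * Kb ≠ 0 := by positivity
    exact (mul_eq_zero.mp h).resolve_left h2
  have hab : a = b := by
    rcases mul_eq_zero.mp key with h | h
    · linarith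
    · exfalso
      have ht1 : ⟪g12, g13⟫_ℝ = 1 := by rw [← ht_def]; linarith
      have hgg : g12 = g13 := (inner_eq_one_iff_of_norm_eq_one hng12 hng13).mp ht1
      have : g12s - g13s = 0 := by
        have h0 : Kb • (g12s - g13s) = 0 := by rw [← Ediff, hgg, sub_self, smul_zero]
        exact (smul_eq_zero.mp h0).resolve_left hKb.ne'
      exact hne (sub_eq_zero.mp this)
  rw [← hab] at E2
  rw [← hab] at E1
  have hdiff : g12 - g13 = g12s - g13s := smul_right_injective _ hKb.ne' Ediff
  have hts : t = s := by
    have h := congrArg (fun w => ⟪w, w⟫_ℝ) hdiff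
    simp only [inner_sub_left, inner_sub_right, i12, i13, i12s, i13s, i1312, i13s12s,
      ← ht_def, ← hs_def] at h
    linarith
  have hs_lb : -1 < s := by
    have habs := abs_real_inner_le_norm g12s g13s
    rw [hg12s, hg13s, mul_one, ← hs_def] at habs
    rcases lt_or_eq_of_le (neg_le_of_abs_le habs) with h | h
    · exact h
    · exfalso
      apply hne'
      have h1 : ⟪g12s, -g13s⟫_ℝ = 1 := by
        rw [inner_neg_right, ← hs_def, ← h]; ring
      exact (inner_eq_one_iff_of_norm_eq_one hg12s (by rw [norm_neg, hg13s])).mp h1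
  have Nsum : (2 * a + Kb) ^ 2 * (2 + 2 * t) = Kb ^ 2 * (2 + 2 * s) := by
    have hE : (2 * a + Kb) • (g12 + g13) = Kb • (g12s + g13s) := by
      linear_combination (norm := module) E1 + E2
    have h := congrArg (fun w => ⟪w, w⟫_ℝ) hE
    simp only [inner_add_left, inner_add_right, real_inner_smul_left, real_inner_smul_right,
      i12, i13, i12s, i13s, i1312, i13s12s, ← ht_def, ← hs_def, mul_one] at h
    linear_combination h
  have hfact : a * (a + Kb) = 0 := by
    have h2t : 0 < 2 + 2 * t := by rw [hts]; linarith
    have : (2 * a + Kb) ^ 2 = Kb ^ 2 := by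
      rw [hts] at Nsum
      exact mul_right_cancel₀ (by linarith) Nsum
    linear_combination this / 4
  rcases mul_eq_zero.mp hfact with ha0 | haKb
  · -- equilibrium case
    have he12d0 : e12d = 0 := by
      have ha0' : Kd * (d12 * e12d) = 0 := by rw [← ha_def]; exact ha0
      have h : d12 * e12d = 0 := (mul_eq_zero.mp ha0').resolve_left hKd.ne'
      exact (mul_eq_zero.mp h).resolve_left hd12pos.ne'
    have he13d0 : e13d = 0 := by
      have hb0 : Kd * (d13 * e13d) = 0 := by rw [← hb_def, ← hab]; exact ha0
      have h : d13 * e13d = 0 := (mul_eq_zero.mp hb0).resolve_left hKd.ne'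
      exact (mul_eq_zero.mp h).resolve_left hd13pos.ne'
    rw [ha0] at E1 E2
    have hg12eq : g12 = g12s := by
      have h : Kb • g12 = Kb • g12s := by
        linear_combination (norm := module) E1
      exact smul_right_injective _ hKb.ne' h
    have hg13eq : g13 = g13s := by
      have h : Kb • g13 = Kb • g13s := by
        linear_combination (norm := module) E2
      exact smul_right_injective _ hKb.ne' h
    left
    refine ⟨⟨he12d0, he13d0, hg12eq, hg13eq⟩, fun hr => ?_⟩
    have h1 := hr.2.2.1
    rw [he12d0, mul_zero, neg_div] at h1
    have h2 : 0 < Kb / Kd := by positivity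
    linarith
  · -- moving case
    have haK : a = -Kb := by linarith
    have hbK : b = -Kb := by rw [← hab]; exact haK
    rw [haK] at E1 E2
    have hg13eq : g13 = -g12s := by
      have h : Kb • g13 = Kb • (-g12s) := by
        linear_combination (norm := module) -E1
      exact smul_right_injective _ hKb.ne' h
    have hg12eq : g12 = -g13s := by
      have h : Kb • g12 = Kb • (-g13s) := by
        linear_combination (norm := module) -E2
      exact smul_right_injective _ hKb.ne' h
    have hde12 : d12 * e12d = -Kb / Kd := by
      rw [eq_div_iff hKd.ne']
      rw [ha_def] at haK; linarith
    have hde13 : d13 * e13d = -Kb / Kd := by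
      rw [eq_div_iff hKd.ne']
      rw [hb_def] at hbK; linarith
    have hw : (Kd * e12d) • z12 + (Kd * e13d) • z13 = Kb • (g12s + g13s) := by
      rw [hv12, hv13, hg12eq, hg13eq, haK, hbK]
      module
    have hw12 : (-Kb) • e12b = Kb • (g12s + g13s) := by
      have h := hstat12
      rw [← he12b] at h
      linear_combination (norm := module) hw - h - hv12 - hv13
    have hw13 : (-Kb) • e13b = Kb • (g12s + g13s) := by
      have h := hstat13
      rw [← he13b] at h
      linear_combination (norm := module) hw - h - hv12 - hv13
    right
    refine ⟨⟨hg12eq, hg13eq, hde12, hde13, hw, hw12, hw13⟩, fun hl => ?_⟩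
    have h0 : d12 * e12d = 0 := by rw [hl.1, mul_zero]
    rw [hde12, neg_div] at h0
    have h2 : 0 < Kb / Kd := by positivity
    linarith
end

section
/- Let x*, y*, p*, q* > 0 be real numbers and let (a,b), (c,d) ∈ ℝ² be unit vectors (a² + b² = 1, c² + d² = 1) with s := a·d − b·c ≠ 0. Consider the 4×4 real matrix A_E = −D − M, where D = diag(x*, x*, p*, p*) and M is the matrix with rows [(y*−x*)a², (y*−x*)ab, q*c², q*cd], [(y*−x*)ab, (y*−x*)b², q*cd, q*d²], [y*a², y*ab, (q*−p*)c², (q*−p*)cd], [y*ab, y*b², (q*−p*)cd, (q*−p*)d²]. Then the characteristic polynomial of A_E equals (λ + x*)(λ + p*)(λ² + (y* + q*)λ + y*·q*·s²), all eigenvalues of A_E are real, and all eigenvalues of A_E are negative; in particular A_E is Hurwitz. -/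
open Polynomial

private theorem det4 {R : Type*} [CommRing R] (M : Matrix (Fin 4) (Fin 4) R) :
    M.det = M 0 0 * (M 1 1 * (M 2 2 * M 3 3 - M 2 3 * M 3 2) - M 1 2 * (M 2 1 * M 3 3 - M 2 3 * M 3 1) + M 1 3 * (M 2 1 * M 3 2 - M 2 2 * M 3 1))
      - M 0 1 * (M 1 0 * (M 2 2 * M 3 3 - M 2 3 * M 3 2) - M 1 2 * (M 2 0 * M 3 3 - M 2 3 * M 3 0) + M 1 3 * (M 2 0 * M 3 2 - M 2 2 * M 3 0))
      + M 0 2 * (M 1 0 * (M 2 1 * M 3 3 - M 2 3 * M 3 1) - M 1 1 * (M 2 0 * M 3 3 - M 2 3 * M 3 0) + M 1 3 * (M 2 0 * M 3 1 - M 2 1 * M 3 0))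
      - M 0 3 * (M 1 0 * (M 2 1 * M 3 2 - M 2 2 * M 3 1) - M 1 1 * (M 2 0 * M 3 2 - M 2 2 * M 3 0) + M 1 2 * (M 2 0 * M 3 1 - M 2 1 * M 3 0)) := by
  simp [Matrix.det_succ_row_zero, Fin.sum_univ_succ, Fin.succAbove]
  ring

set_option maxRecDepth 40000 in
set_option maxHeartbeats 1000000 in
/-- the Jacobian of the (1D2B) link dynamics at the desired
equilibrium has characteristic polynomial
`(λ + x*)(λ + p*)(λ² + (y* + q*)λ + y*q*s²)`, and all its eigenvalues are real
and negative; in particular it is Hurwitz. -/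
theorem stmt_10 (x y p q a b c d : ℝ)
    (hx : 0 < x) (hy : 0 < y) (hp : 0 < p) (hq : 0 < q)
    (hab : a ^ 2 + b ^ 2 = 1) (hcd : c ^ 2 + d ^ 2 = 1)
    (s : ℝ) (hs : s = a * d - b * c) (hs0 : s ≠ 0)
    (A : Matrix (Fin 4) (Fin 4) ℝ)
    (hA : A = -(Matrix.diagonal ![x, x, p, p]) -
      !![(y - x) * a ^ 2, (y - x) * (a * b), q * c ^ 2, q * (c * d);
         (y - x) * (a * b), (y - x) * b ^ 2, q * (c * d), q * d ^ 2;
         y * a ^ 2, y * (a * b), (q - p) * c ^ 2, (q - p) * (c * d);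
         y * (a * b), y * b ^ 2, (q - p) * (c * d), (q - p) * d ^ 2]) :
    A.charpoly = (X + C x) * (X + C p) * (X ^ 2 + C (y + q) * X + C (y * q * s ^ 2)) ∧
    (∀ μ : ℂ, ((A.map (algebraMap ℝ ℂ)).charpoly).IsRoot μ → μ.im = 0 ∧ μ.re < 0) := by
  subst hs
  have hchar : A.charpoly = (X + C x) * (X + C p) *
      (X ^ 2 + C (y + q) * X + C (y * q * (a * d - b * c) ^ 2)) := by
    have hab' : (C a : ℝ[X]) ^ 2 + (C b : ℝ[X]) ^ 2 = 1 := by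
      rw [← map_pow, ← map_pow, ← map_add, hab, map_one]
    have hcd' : (C c : ℝ[X]) ^ 2 + (C d : ℝ[X]) ^ 2 = 1 := by
      rw [← map_pow, ← map_pow, ← map_add, hcd, map_one]
    have h00 : A.charmatrix 0 0 = X - C (-x - (y - x) * a ^ 2) := by
      simp [Matrix.charmatrix_apply, hA, Matrix.diagonal_apply]
    have h01 : A.charmatrix 0 1 = -C (-((y - x) * (a * b))) := by
      simp [Matrix.charmatrix_apply, hA, Matrix.diagonal_apply]
    have h02 : A.charmatrix 0 2 = -C (-(q * c ^ 2)) := by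
      simp [Matrix.charmatrix_apply, hA, Matrix.diagonal_apply]
    have h03 : A.charmatrix 0 3 = -C (-(q * (c * d))) := by
      simp [Matrix.charmatrix_apply, hA, Matrix.diagonal_apply]
    have h10 : A.charmatrix 1 0 = -C (-((y - x) * (a * b))) := by
      simp [Matrix.charmatrix_apply, hA, Matrix.diagonal_apply]
    have h11 : A.charmatrix 1 1 = X - C (-x - (y - x) * b ^ 2) := by
      simp [Matrix.charmatrix_apply, hA, Matrix.diagonal_apply]
    have h12 : A.charmatrix 1 2 = -C (-(q * (c * d))) := by
      simp [Matrix.charmatrix_apply, hA, Matrix.diagonal_apply]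
    have h13 : A.charmatrix 1 3 = -C (-(q * d ^ 2)) := by
      simp [Matrix.charmatrix_apply, hA, Matrix.diagonal_apply]
    have h20 : A.charmatrix 2 0 = -C (-(y * a ^ 2)) := by
      simp [Matrix.charmatrix_apply, hA, Matrix.diagonal_apply]
    have h21 : A.charmatrix 2 1 = -C (-(y * (a * b))) := by
      simp [Matrix.charmatrix_apply, hA, Matrix.diagonal_apply]
    have h22 : A.charmatrix 2 2 = X - C (-p - (q - p) * c ^ 2) := by
      simp [Matrix.charmatrix_apply, hA, Matrix.diagonal_apply]
    have h23 : A.charmatrix 2 3 = -C (-((q - p) * (c * d))) := by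
      simp [Matrix.charmatrix_apply, hA, Matrix.diagonal_apply]
    have h30 : A.charmatrix 3 0 = -C (-(y * (a * b))) := by
      simp [Matrix.charmatrix_apply, hA, Matrix.diagonal_apply]
    have h31 : A.charmatrix 3 1 = -C (-(y * b ^ 2)) := by
      simp [Matrix.charmatrix_apply, hA, Matrix.diagonal_apply]
    have h32 : A.charmatrix 3 2 = -C (-((q - p) * (c * d))) := by
      simp [Matrix.charmatrix_apply, hA, Matrix.diagonal_apply]
    have h33 : A.charmatrix 3 3 = X - C (-p - (q - p) * d ^ 2) := by
      simp [Matrix.charmatrix_apply, hA, Matrix.diagonal_apply]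
    rw [Matrix.charpoly, det4, h00, h01, h02, h03, h10, h11, h12, h13, h20, h21, h22, h23, h30, h31, h32, h33]
    simp only [map_sub, map_mul, map_add, map_pow, map_neg, map_one]
    linear_combination ((C x) * (C y) * (C p)^2 + (-1:ℝ[X]) * (C x) * (C y) * (C p)^2 * (C d)^2 + (-1:ℝ[X]) * (C x) * (C y) * (C p)^2 * (C c)^2 + (-1:ℝ[X]) * (C x)^2 * (C p) * (C q) * (C d)^2 + (-1:ℝ[X]) * (C x)^2 * (C p) * (C q) * (C c)^2 + (-1:ℝ[X]) * (C x)^2 * (C p)^2 + (C x)^2 * (C p)^2 * (C d)^2 + (C x)^2 * (C p)^2 * (C c)^2 + (X) * (C y) * (C p)^2 + (-1:ℝ[X]) * (X) * (C y) * (C p)^2 * (C d)^2 + (-1:ℝ[X]) * (X) * (C y) * (C p)^2 * (C c)^2 + (-1:ℝ[X]) * (X) * (C x) * (C p) * (C q) * (C d)^2 + (-1:ℝ[X]) * (X) * (C x) * (C p) * (C q) * (C c)^2 + (-1:ℝ[X]) * (X) * (C x) * (C p)^2 + (X) * (C x) * (C p)^2 * (C d)^2 + (X) * (C x) * (C p)^2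 * (C c)^2 + (2:ℝ[X]) * (X) * (C x) * (C y) * (C p) + (-1:ℝ[X]) * (X) * (C x) * (C y) * (C p) * (C d)^2 + (-1:ℝ[X]) * (X) * (C x) * (C y) * (C p) * (C c)^2 + (-1:ℝ[X]) * (X) * (C x)^2 * (C q) * (C d)^2 + (-1:ℝ[X]) * (X) * (C x)^2 * (C q) * (C c)^2 + (-2:ℝ[X]) * (X) * (C x)^2 * (C p) + (X) * (C x)^2 * (C p) * (C d)^2 + (X) * (C x)^2 * (C p) * (C c)^2 + (2:ℝ[X]) * (X)^2 * (C y) * (C p) + (-1:ℝ[X]) * (X)^2 * (C y) * (C p) * (C d)^2 + (-1:ℝ[X]) * (X)^2 * (C y) * (C p) * (C c)^2 + (-1:ℝ[X]) * (X)^2 * (C x) * (C q) * (C d)^2 + (-1:ℝ[X]) * (X)^2 * (C x) * (C q) * (C c)^2 + (-2:ℝ[X]) * (X)^2 * (C x) * (C p) + (X)^2 * (C x) * (C p) * (C d)^2 + (X)^2 * (C x) * (C p) * (C c)^2 + (X)^2 * (C x) * (C y) + (-1:ℝ[X]) * (X)^2 * (C x)^2 + (X)^3 * (C y) + (-1:ℝ[X])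 * (X)^3 * (C x)) * hab' + ((-1:ℝ[X]) * (C x) * (C y) * (C p)^2 + (-1:ℝ[X]) * (X) * (C y) * (C p)^2 + (X) * (C x) * (C p) * (C q) + (-1:ℝ[X]) * (X) * (C x) * (C p)^2 + (-1:ℝ[X]) * (X) * (C x) * (C y) * (C p) + (X)^2 * (C p) * (C q) + (-1:ℝ[X]) * (X)^2 * (C p)^2 + (-1:ℝ[X]) * (X)^2 * (C y) * (C p) + (X)^2 * (C x) * (C q) + (-1:ℝ[X]) * (X)^2 * (C x) * (C p) + (X)^3 * (C q) + (-1:ℝ[X]) * (X)^3 * (C p)) * hcd'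
  refine ⟨hchar, ?_⟩
  intro μ hroot
  rw [Matrix.charpoly_map A (algebraMap ℝ ℂ), hchar] at hroot
  have heval : ((μ : ℂ) + x) * ((μ : ℂ) + p) *
      (μ ^ 2 + ((y : ℂ) + q) * μ + ((y : ℂ) * q * ((a : ℂ) * d - (b : ℂ) * c) ^ 2)) = 0 := by
    have h := hroot
    simp only [Polynomial.IsRoot, Polynomial.eval_map, Polynomial.eval₂_mul, Polynomial.eval₂_add,
      Polynomial.eval₂_pow, Polynomial.eval₂_X, Polynomial.eval₂_C, Complex.coe_algebraMap] at h
    push_cast at h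
    linear_combination h
  have hs2 : ((a * d - b * c) : ℝ) ^ 2 ≤ 1 := by nlinarith [sq_nonneg (a * c + b * d)]
  have hk : (0:ℝ) < y * q * (a * d - b * c) ^ 2 := by positivity
  rcases mul_eq_zero.mp heval with h12 | h3
  · rcases mul_eq_zero.mp h12 with h1 | h2
    · have hμ : μ = -(x : ℂ) := by linear_combination h1
      rw [hμ]
      exact ⟨by simp, by simpa using hx⟩
    · have hμ : μ = -(p : ℂ) := by linear_combination h2
      rw [hμ]
      exact ⟨by simp, by simpa using hp⟩
  · set u := μ.re with hu
    set v := μ.im with hv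
    have hre : u ^ 2 - v ^ 2 + (y + q) * u + y * q * (a * d - b * c) ^ 2 = 0 := by
      have h := congrArg Complex.re h3
      simp [Complex.add_re, Complex.mul_re, Complex.mul_im, pow_two] at h
      nlinarith [h]
    have him : v * (2 * u + (y + q)) = 0 := by
      have h := congrArg Complex.im h3
      simp [Complex.add_im, Complex.mul_re, Complex.mul_im, pow_two] at h
      nlinarith [h]
    have hv0 : v = 0 := by
      by_contra hvne
      have h2u : 2 * u + (y + q) = 0 := by
        rcases mul_eq_zero.mp him with h | h
        · exact absurd h hvne
        · exact h
      nlinarith [sq_pos_of_ne_zero hvne, sq_nonneg (y - q), mul_pos hy hq]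
    refine ⟨hv0, ?_⟩
    rw [hv0] at hre
    by_contra hun
    push_neg at hun
    nlinarith [mul_pos hy hq]
end

section
/- In the (1B2D) setup, the closed-loop system is at an equilibrium if and only if both distance errors vanish and the bearings are either correct or flipped; precisely: K_b·e₁₂b + K_b·e₁₃b = 0, −K_d·e₁₂d·z₁₂ = 0 and −K_d·e₁₃d·z₁₃ = 0 hold simultaneously if and only if e₁₂d = 0, e₁₃d = 0, and either (g₁₂ = g₁₂* and g₁₃ = g₁₃*) or (g₁₂ = g₁₃* and g₁₃ = g₁₂*). -/
lemma quad_aux (a0 a1 b0 b1 c0 c1 : ℝ) (h1 : a0^2+a1^2 = 1) (h2 : b0^2+b1^2 = 1)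
    (h3 : c0^2+c1^2 = 1) (h4 : (b0+c0-a0)^2+(b1+c1-a1)^2 = 1)
    (hs : ¬(b0+c0 = 0 ∧ b1+c1 = 0)) :
    (a0 = b0 ∧ a1 = b1) ∨ (a0 = c0 ∧ a1 = c1) := by
  have huv : (a0-b0)*(a0-c0)+(a1-b1)*(a1-c1) = 0 := by linear_combination (h1 - h2 - h3)/2 + h4/2
  have hsu : (b0+c0)*(a0-b0) + (b1+c1)*(a1-b1) = 0 := by linear_combination (h1 - h2 + h3)/2 - h4/2
  have hsv : (b0+c0)*(a0-c0) + (b1+c1)*(a1-c1) = 0 := by linear_combination (h1 + h2 - h3)/2 - h4/2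
  have hc0 : (b0+c0) * ((a0-b0)*(a1-c1) - (a1-b1)*(a0-c0)) = 0 := by
    linear_combination (a1-c1)*hsu - (a1-b1)*hsv
  have hc1 : (b1+c1) * ((a0-b0)*(a1-c1) - (a1-b1)*(a0-c0)) = 0 := by
    linear_combination (a0-b0)*hsv - (a0-c0)*hsu
  have hcross : (a0-b0)*(a1-c1) - (a1-b1)*(a0-c0) = 0 := by
    rcases not_and_or.mp hs with h | h
    · exact (mul_eq_zero.mp hc0).resolve_left h
    · exact (mul_eq_zero.mp hc1).resolve_left h
  have hlag : ((a0-b0)^2+(a1-b1)^2) * ((a0-c0)^2+(a1-c1)^2) = 0 := by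
    linear_combination ((a0-b0)*(a0-c0)+(a1-b1)*(a1-c1))*huv +
      ((a0-b0)*(a1-c1)-(a1-b1)*(a0-c0))*hcross
  rcases mul_eq_zero.mp hlag with h | h
  · left
    have h0 := (add_eq_zero_iff_of_nonneg (sq_nonneg _) (sq_nonneg _)).mp h
    exact ⟨sub_eq_zero.mp (pow_eq_zero_iff two_ne_zero |>.mp h0.1),
      sub_eq_zero.mp (pow_eq_zero_iff two_ne_zero |>.mp h0.2)⟩
  · right
    have h0 := (add_eq_zero_iff_of_nonneg (sq_nonneg _) (sq_nonneg _)).mp h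
    exact ⟨sub_eq_zero.mp (pow_eq_zero_iff two_ne_zero |>.mp h0.1),
      sub_eq_zero.mp (pow_eq_zero_iff two_ne_zero |>.mp h0.2)⟩

lemma vec_aux (g b c : EuclideanSpace ℝ (Fin 2)) (hg : ‖g‖ = 1) (hb : ‖b‖ = 1)
    (hc : ‖c‖ = 1) (h4 : ‖b + c - g‖ = 1) (hs : b + c ≠ 0) : g = b ∨ g = c := by
  have norm_sq : ∀ x : EuclideanSpace ℝ (Fin 2), ‖x‖^2 = x 0^2 + x 1^2 := by
    intro x
    rw [EuclideanSpace.norm_eq, Real.sq_sqrt (by positivity)]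
    simp [Fin.sum_univ_two, sq_abs]
  have h1 : g 0^2 + g 1^2 = 1 := by rw [← norm_sq, hg]; norm_num
  have h2 : b 0^2 + b 1^2 = 1 := by rw [← norm_sq, hb]; norm_num
  have h3 : c 0^2 + c 1^2 = 1 := by rw [← norm_sq, hc]; norm_num
  have h4' : (b 0 + c 0 - g 0)^2 + (b 1 + c 1 - g 1)^2 = 1 := by
    have := norm_sq (b + c - g)
    rw [h4] at this
    simpa using this.symm
  have hs' : ¬(b 0 + c 0 = 0 ∧ b 1 + c 1 = 0) := by
    rintro ⟨u, v⟩
    apply hs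
    ext i
    fin_cases i <;> simpa [u, v]
  rcases quad_aux (g 0) (g 1) (b 0) (b 1) (c 0) (c 1) h1 h2 h3 h4' hs' with ⟨x, y⟩ | ⟨x, y⟩
  · left; ext i; fin_cases i <;> assumption
  · right; ext i; fin_cases i <;> assumption

/-- equilibria of the (1B2D) closed loop are exactly the
configurations where both distance errors vanish and the bearings are either
correct or flipped. -/
theorem stmt_13 (Kd Kb d12s d13s : ℝ) (hKd : 0 < Kd) (hKb : 0 < Kb)
    (hd12s : 0 < d12s) (hd13s : 0 < d13s)
    (g12s g13s : EuclideanSpace ℝ (Fin 2))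
    (hg12s : ‖g12s‖ = 1) (hg13s : ‖g13s‖ = 1)
    (hne : g12s ≠ g13s) (hne' : g12s ≠ -g13s)
    (p₁ p₂ p₃ : EuclideanSpace ℝ (Fin 2)) (hp12 : p₁ ≠ p₂) (hp13 : p₁ ≠ p₃)
    (z12 z13 : EuclideanSpace ℝ (Fin 2)) (hz12 : z12 = p₂ - p₁) (hz13 : z13 = p₃ - p₁)
    (d12 d13 : ℝ) (hd12 : d12 = ‖z12‖) (hd13 : d13 = ‖z13‖)
    (g12 g13 : EuclideanSpace ℝ (Fin 2)) (hg12 : g12 = d12⁻¹ • z12) (hg13 : g13 = d13⁻¹ • z13)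
    (e12d e13d : ℝ) (he12d : e12d = d12 ^ 2 - d12s ^ 2) (he13d : e13d = d13 ^ 2 - d13s ^ 2)
    (e12b e13b : EuclideanSpace ℝ (Fin 2))
    (he12b : e12b = g12 - g12s) (he13b : e13b = g13 - g13s) :
    (Kb • e12b + Kb • e13b = 0 ∧ (-(Kd * e12d)) • z12 = 0 ∧ (-(Kd * e13d)) • z13 = 0) ↔
      (e12d = 0 ∧ e13d = 0 ∧
        ((g12 = g12s ∧ g13 = g13s) ∨ (g12 = g13s ∧ g13 = g12s))) := by
  have hz12ne : z12 ≠ 0 := by rw [hz12]; exact sub_ne_zero.mpr hp12.symm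
  have hz13ne : z13 ≠ 0 := by rw [hz13]; exact sub_ne_zero.mpr hp13.symm
  have hd12pos : 0 < d12 := hd12 ▸ norm_pos_iff.mpr hz12ne
  have hd13pos : 0 < d13 := hd13 ▸ norm_pos_iff.mpr hz13ne
  have hg12n : ‖g12‖ = 1 := by
    rw [hg12, norm_smul, Real.norm_eq_abs, abs_inv, abs_of_pos hd12pos, ← hd12]
    exact inv_mul_cancel₀ hd12pos.ne'
  have hg13n : ‖g13‖ = 1 := by
    rw [hg13, norm_smul, Real.norm_eq_abs, abs_inv, abs_of_pos hd13pos, ← hd13]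
    exact inv_mul_cancel₀ hd13pos.ne'
  have hsne : g12s + g13s ≠ 0 := fun h => hne' (eq_neg_of_add_eq_zero_left h)
  constructor
  · rintro ⟨hb, h2, h3⟩
    have he12d0 : e12d = 0 := by
      rcases smul_eq_zero.mp h2 with h | h
      · have h' : Kd * e12d = 0 := neg_eq_zero.mp h
        exact (mul_eq_zero.mp h').resolve_left hKd.ne'
      · exact absurd h hz12ne
    have he13d0 : e13d = 0 := by
      rcases smul_eq_zero.mp h3 with h | h
      · have h' : Kd * e13d = 0 := neg_eq_zero.mp h
        exact (mul_eq_zero.mp h').resolve_left hKd.ne'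
      · exact absurd h hz13ne
    have hbsum : e12b + e13b = 0 := by
      have h' : Kb • (e12b + e13b) = 0 := by rw [smul_add]; exact hb
      exact (smul_eq_zero.mp h').resolve_left hKb.ne'
    have hsum : g12 + g13 = g12s + g13s := by
      have h'' : g12 + g13 - (g12s + g13s) = 0 := by
        rw [← hbsum, he12b, he13b]; abel
      exact sub_eq_zero.mp h''
    have hg13eq : g13 = g12s + g13s - g12 := by rw [← hsum]; abel
    have h4 : ‖g12s + g13s - g12‖ = 1 := by rw [← hg13eq]; exact hg13n
    refine ⟨he12d0, he13d0, ?_⟩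
    rcases vec_aux g12 g12s g13s hg12n hg12s hg13s h4 hsne with h | h
    · exact Or.inl ⟨h, by rw [hg13eq, h]; abel⟩
    · exact Or.inr ⟨h, by rw [hg13eq, h]; abel⟩
  · rintro ⟨h1, h2, h3⟩
    refine ⟨?_, by rw [h1]; simp, by rw [h2]; simp⟩
    rcases h3 with ⟨ha, hb2⟩ | ⟨ha, hb2⟩
    · rw [he12b, he13b, ha, hb2]; simp
    · rw [he12b, he13b, ha, hb2, ← smul_add]
      convert smul_zero (M := ℝ) Kb using 2
      abel
end

section
/- In the (1B2D) setup, suppose both links are stationary, i.e. K_d·e₁₂d·z₁₂ + K_b·(e₁₂b + e₁₃b) = 0 and K_d·e₁₃d·z₁₃ + K_b·(e₁₂b + e₁₃b) = 0. Then either (i) e₁₂d = 0, e₁₃d = 0 and (g₁₂, g₁₃) equals (g₁₂*, g₁₃*) or (g₁₃*, g₁₂*) (an equilibrium configuration), or (ii) the three robots are co-linear and aligned with the desired bearing sum: g₁₃ = g₁₂ or g₁₃ = −g₁₂, and there exists a nonzero real scalar ρ with g₁₂ = ρ·(g₁₂* + g₁₃*). -/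
private lemma key2_stmt14 (u0 u1 v0 v1 a0 a1 b0 b1 : ℝ)
    (hu : u0^2+u1^2 = 1) (hv : v0^2+v1^2 = 1) (ha : a0^2+a1^2 = 1) (hb : b0^2+b1^2 = 1)
    (hs : a0 + b0 ≠ 0 ∨ a1 + b1 ≠ 0)
    (h0 : u0+v0 = a0+b0) (h1 : u1+v1 = a1+b1) :
    (u0 = a0 ∧ u1 = a1 ∧ v0 = b0 ∧ v1 = b1) ∨
    (u0 = b0 ∧ u1 = b1 ∧ v0 = a0 ∧ v1 = a1) := by
  have hv0 : v0 = a0 + b0 - u0 := by linarith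
  have hv1 : v1 = a1 + b1 - u1 := by linarith
  rw [hv0, hv1] at hv
  have hsp : (a0+b0)*(u0-a0) + (a1+b1)*(u1-a1) = 0 := by
    linear_combination (-(1/2 : ℝ)) * hv + (1/2 : ℝ)*hu - (1/2 : ℝ)*ha + (1/2 : ℝ)*hb
  have hsq : (a0+b0)*(u0-b0) + (a1+b1)*(u1-b1) = 0 := by
    linear_combination (-(1/2 : ℝ)) * hv + (1/2 : ℝ)*hu + (1/2 : ℝ)*ha - (1/2 : ℝ)*hb
  have hpq : (u0-a0)*(u0-b0) + (u1-a1)*(u1-b1) = 0 := by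
    linear_combination (1/2 : ℝ)*hu + (1/2 : ℝ)*hv - (1/2 : ℝ)*ha - (1/2 : ℝ)*hb
  have hX : (u0-a0)*(u1-b1) - (u1-a1)*(u0-b0) = 0 := by
    rcases hs with hs | hs
    · have h : (a0+b0) * ((u0-a0)*(u1-b1) - (u1-a1)*(u0-b0)) = 0 := by
        linear_combination (u1-b1)*hsp - (u1-a1)*hsq
      exact (mul_eq_zero.mp h).resolve_left hs
    · have h : (a1+b1) * ((u0-a0)*(u1-b1) - (u1-a1)*(u0-b0)) = 0 := by
        linear_combination (-(u0-b0))*hsp + (u0-a0)*hsq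
      exact (mul_eq_zero.mp h).resolve_left hs
  have hprod : ((u0-a0)^2 + (u1-a1)^2) * ((u0-b0)^2 + (u1-b1)^2) = 0 := by
    linear_combination ((u0-a0)*(u0-b0) + (u1-a1)*(u1-b1) ) * hpq +
      ((u0-a0)*(u1-b1) - (u1-a1)*(u0-b0)) * hX
  rcases mul_eq_zero.mp hprod with h | h
  · left
    have ha0 : (u0-a0)^2 = 0 := by linarith [sq_nonneg (u0-a0), sq_nonneg (u1-a1)]
    have ha1 : (u1-a1)^2 = 0 := by linarith [sq_nonneg (u0-a0), sq_nonneg (u1-a1)]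
    have e0 : u0 = a0 := by have := (pow_eq_zero_iff two_ne_zero).mp ha0; linarith [sub_eq_zero.mp this]
    have e1 : u1 = a1 := by have := (pow_eq_zero_iff two_ne_zero).mp ha1; linarith [sub_eq_zero.mp this]
    exact ⟨e0, e1, by linarith, by linarith⟩
  · right
    have hb0 : (u0-b0)^2 = 0 := by linarith [sq_nonneg (u0-b0), sq_nonneg (u1-b1)]
    have hb1 : (u1-b1)^2 = 0 := by linarith [sq_nonneg (u0-b0), sq_nonneg (u1-b1)]
    have e0 : u0 = b0 := by have := (pow_eq_zero_iff two_ne_zero).mp hb0; linarith [sub_eq_zero.mp this]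
    have e1 : u1 = b1 := by have := (pow_eq_zero_iff two_ne_zero).mp hb1; linarith [sub_eq_zero.mp this]
    exact ⟨e0, e1, by linarith, by linarith⟩

private lemma unit_comp_stmt14 (x : EuclideanSpace ℝ (Fin 2)) (h : ‖x‖ = 1) :
    x 0 ^ 2 + x 1 ^ 2 = 1 := by
  rw [EuclideanSpace.norm_eq] at h
  have := Real.sqrt_eq_one.mp h
  simpa [Fin.sum_univ_two, Real.norm_eq_abs, sq_abs] using this

/-- if both links of the (1B2D) setup are stationary, then either
(i) the configuration is an equilibrium (correct or flipped), or (ii) the three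
robots are co-linear and aligned with the direction of `g₁₂* + g₁₃*`. -/
theorem stmt_14 (Kd Kb d12s d13s : ℝ) (hKd : 0 < Kd) (hKb : 0 < Kb)
    (hd12s : 0 < d12s) (hd13s : 0 < d13s)
    (g12s g13s : EuclideanSpace ℝ (Fin 2))
    (hg12s : ‖g12s‖ = 1) (hg13s : ‖g13s‖ = 1)
    (hne : g12s ≠ g13s) (hne' : g12s ≠ -g13s)
    (p₁ p₂ p₃ : EuclideanSpace ℝ (Fin 2)) (hp12 : p₁ ≠ p₂) (hp13 : p₁ ≠ p₃)
    (z12 z13 : EuclideanSpace ℝ (Fin 2)) (hz12 : z12 = p₂ - p₁) (hz13 : z13 = p₃ - p₁)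
    (d12 d13 : ℝ) (hd12 : d12 = ‖z12‖) (hd13 : d13 = ‖z13‖)
    (g12 g13 : EuclideanSpace ℝ (Fin 2)) (hg12 : g12 = d12⁻¹ • z12) (hg13 : g13 = d13⁻¹ • z13)
    (e12d e13d : ℝ) (he12d : e12d = d12 ^ 2 - d12s ^ 2) (he13d : e13d = d13 ^ 2 - d13s ^ 2)
    (e12b e13b : EuclideanSpace ℝ (Fin 2))
    (he12b : e12b = g12 - g12s) (he13b : e13b = g13 - g13s)
    (hstat12 : (Kd * e12d) • z12 + Kb • (e12b + e13b) = 0)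
    (hstat13 : (Kd * e13d) • z13 + Kb • (e12b + e13b) = 0) :
    (e12d = 0 ∧ e13d = 0 ∧
      ((g12 = g12s ∧ g13 = g13s) ∨ (g12 = g13s ∧ g13 = g12s))) ∨
    ((g13 = g12 ∨ g13 = -g12) ∧ ∃ ρ : ℝ, ρ ≠ 0 ∧ g12 = ρ • (g12s + g13s)) := by
  have hz12ne : z12 ≠ 0 := by rw [hz12]; exact sub_ne_zero.mpr hp12.symm
  have hz13ne : z13 ≠ 0 := by rw [hz13]; exact sub_ne_zero.mpr hp13.symm
  have hd12pos : 0 < d12 := by rw [hd12]; exact norm_pos_iff.mpr hz12ne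
  have hd13pos : 0 < d13 := by rw [hd13]; exact norm_pos_iff.mpr hz13ne
  have hd12ne : d12 ≠ 0 := ne_of_gt hd12pos
  have hd13ne : d13 ≠ 0 := ne_of_gt hd13pos
  have hz12g : z12 = d12 • g12 := by
    rw [hg12, smul_smul, mul_inv_cancel₀ hd12ne, one_smul]
  have hg12n : ‖g12‖ = 1 := by
    rw [hg12, norm_smul, Real.norm_eq_abs, abs_inv, abs_of_pos hd12pos, ← hd12,
      inv_mul_cancel₀ hd12ne]
  have hg13n : ‖g13‖ = 1 := by
    rw [hg13, norm_smul, Real.norm_eq_abs, abs_inv, abs_of_pos hd13pos, ← hd13,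
      inv_mul_cancel₀ hd13ne]
  by_cases hS : e12b + e13b = 0
  · -- stationary bearing sum vanishes: equilibrium case
    have h12z : (Kd * e12d) • z12 = 0 := by
      rw [hS, smul_zero, add_zero] at hstat12; exact hstat12
    have h13z : (Kd * e13d) • z13 = 0 := by
      rw [hS, smul_zero, add_zero] at hstat13; exact hstat13
    have he12d0 : e12d = 0 := by
      rcases smul_eq_zero.mp h12z with h | h
      · rcases mul_eq_zero.mp h with h | h
        · exact absurd h hKd.ne'
        · exact h
      · exact absurd h hz12ne
    have he13d0 : e13d = 0 := by
      rcases smul_eq_zero.mp h13z with h | h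
      · rcases mul_eq_zero.mp h with h | h
        · exact absurd h hKd.ne'
        · exact h
      · exact absurd h hz13ne
    have hsum : g12 + g13 = g12s + g13s := by
      rw [he12b, he13b] at hS
      have h2 : g12 + g13 - (g12s + g13s) = 0 := by rw [← hS]; abel
      exact sub_eq_zero.mp h2
    have c0 : g12 0 + g13 0 = g12s 0 + g13s 0 := by simpa using congrArg (fun v => v 0) hsum
    have c1 : g12 1 + g13 1 = g12s 1 + g13s 1 := by simpa using congrArg (fun v => v 1) hsum
    have hsne : g12s 0 + g13s 0 ≠ 0 ∨ g12s 1 + g13s 1 ≠ 0 := by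
      by_contra hcon
      push_neg at hcon
      apply hne'
      ext i
      have h : g12s i + g13s i = 0 := by fin_cases i; exacts [hcon.1, hcon.2]
      have hni : (-g13s) i = -(g13s i) := rfl
      rw [hni]; linarith
    rcases key2_stmt14 (g12 0) (g12 1) (g13 0) (g13 1) (g12s 0) (g12s 1) (g13s 0) (g13s 1)
      (unit_comp_stmt14 g12 hg12n) (unit_comp_stmt14 g13 hg13n)
      (unit_comp_stmt14 g12s hg12s) (unit_comp_stmt14 g13s hg13s)
      hsne c0 c1 with ⟨e0, e1, f0, f1⟩ | ⟨e0, e1, f0, f1⟩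
    · refine Or.inl ⟨he12d0, he13d0, Or.inl ⟨?_, ?_⟩⟩
      · ext i; fin_cases i; exacts [e0, e1]
      · ext i; fin_cases i; exacts [f0, f1]
    · refine Or.inl ⟨he12d0, he13d0, Or.inr ⟨?_, ?_⟩⟩
      · ext i; fin_cases i; exacts [e0, e1]
      · ext i; fin_cases i; exacts [f0, f1]
  · -- co-linear case
    have hKbS : Kb • (e12b + e13b) ≠ 0 := smul_ne_zero hKb.ne' hS
    have h12 : (Kd * e12d) • z12 = -(Kb • (e12b + e13b)) := eq_neg_of_add_eq_zero_left hstat12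
    have h13 : (Kd * e13d) • z13 = -(Kb • (e12b + e13b)) := eq_neg_of_add_eq_zero_left hstat13
    have he12dne : e12d ≠ 0 := by
      intro h
      rw [h, mul_zero, zero_smul] at h12
      exact hKbS (neg_eq_zero.mp h12.symm)
    have he13dne : e13d ≠ 0 := by
      intro h
      rw [h, mul_zero, zero_smul] at h13
      exact hKbS (neg_eq_zero.mp h13.symm)
    have heq : (Kd * e12d) • z12 = (Kd * e13d) • z13 := by rw [h12, h13]
    have hc13 : Kd * e13d ≠ 0 := mul_ne_zero hKd.ne' he13dne
    have hz13eq : z13 = ((Kd * e13d)⁻¹ * (Kd * e12d)) • z12 := by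
      rw [mul_smul, heq, ← mul_smul, inv_mul_cancel₀ hc13, one_smul]
    obtain ⟨μ, hmu⟩ : ∃ μ : ℝ, g13 = μ • g12 :=
      ⟨_, by rw [hg13, hz13eq, hz12g, smul_smul, smul_smul]⟩
    have habs : |μ| = 1 := by
      have h1 := hg13n
      rw [hmu, norm_smul, Real.norm_eq_abs, hg12n, mul_one] at h1
      exact h1
    have hcol : g13 = g12 ∨ g13 = -g12 := by
      rcases (abs_eq (by norm_num : (0:ℝ) ≤ 1)).mp habs with hμ | hμ
      · left; rw [hmu, hμ, one_smul]
      · right; rw [hmu, hμ, neg_one_smul]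
    have htne : g12s + g13s ≠ 0 := fun h => hne' (eq_neg_iff_add_eq_zero.mpr h)
    refine Or.inr ⟨hcol, ?_⟩
    rcases hcol with hcc | hcc
    · have hkey : (Kd * e12d * d12 + 2 * Kb) • g12 = Kb • (g12s + g13s) := by
        have h := hstat12
        rw [he12b, he13b, hcc, hz12g] at h
        linear_combination (norm := module) h
      have hcne : Kd * e12d * d12 + 2 * Kb ≠ 0 := by
        intro h0
        rw [h0, zero_smul] at hkey
        exact htne ((smul_eq_zero.mp hkey.symm).resolve_left hKb.ne')
      refine ⟨(Kd * e12d * d12 + 2 * Kb)⁻¹ * Kb, mul_ne_zero (inv_ne_zero hcne) hKb.ne', ?_⟩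
      rw [mul_smul, ← hkey, smul_smul, inv_mul_cancel₀ hcne, one_smul]
    · have hkey : (Kd * e12d * d12) • g12 = Kb • (g12s + g13s) := by
        have h := hstat12
        rw [he12b, he13b, hcc, hz12g] at h
        linear_combination (norm := module) h
      have hcne : Kd * e12d * d12 ≠ 0 :=
        mul_ne_zero (mul_ne_zero hKd.ne' he12dne) hd12ne
      refine ⟨(Kd * e12d * d12)⁻¹ * Kb, mul_ne_zero (inv_ne_zero hcne) hKb.ne', ?_⟩
      rw [mul_smul, ← hkey, smul_smul, inv_mul_cancel₀ hcne, one_smul]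
end

section
/- Let s, t, x, y, p, q be real numbers and let (k,l) ∈ ℝ² be a unit vector (k² + l² = 1). Define the 4×4 real matrix A_M = −diag((s+1)x, (s+1)x, (t+1)p, (t+1)p) − N, where N has rows [(y−x)k², (y−x)kl, p·l², −p·kl], [(y−x)kl, (y−x)l², −p·kl, p·k²], [x·l², −x·kl, (q−p)k², (q−p)kl], [−x·kl, x·k², (q−p)kl, (q−p)l²]. Then the characteristic polynomial of A_M factors as det(λI₄ − A_M) = (λ + p·t + q)·(λ + x·s + y)·(λ² + BB·λ + CC), where BB = p(t+1) + x(s+1) and CC = p·x·((t+1)(s+1) − 1). -/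
open Polynomial

set_option maxHeartbeats 1000000 in
private theorem det_fin_four' {R : Type*} [CommRing R] (M : Matrix (Fin 4) (Fin 4) R) :
    M.det = M 0 0*M 1 1*M 2 2*M 3 3 - M 0 0*M 1 1*M 2 3*M 3 2 - M 0 0*M 1 2*M 2 1*M 3 3 + M 0 0*M 1 2*M 2 3*M 3 1 + M 0 0*M 1 3*M 2 1*M 3 2 - M 0 0*M 1 3*M 2 2*M 3 1 - M 0 1*M 1 0*M 2 2*M 3 3 + M 0 1*M 1 0*M 2 3*M 3 2 + M 0 1*M 1 2*M 2 0*M 3 3 - M 0 1*M 1 2*M 2 3*M 3 0 - M 0 1*M 1 3*M 2 0*M 3 2 + M 0 1*M 1 3*M 2 2*M 3 0 + M 0 2*M 1 0*M 2 1*M 3 3 - M 0 2*M 1 0*M 2 3*M 3 1 - M 0 2*M 1 1*M 2 0*M 3 3 + M 0 2*M 1 1*M 2 3*M 3 0 + M 0 2*M 1 3*M 2 0*M 3 1 - M 0 2*M 1 3*M 2 1*M 3 0 - M 0 3*M 1 0*M 2 1*M 3 2 + M 0 3*M 1 0*M 2 2*M 3 1 + M 0 3*M 1 1*M 2 0*M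 3 2 - M 0 3*M 1 1*M 2 2*M 3 0 - M 0 3*M 1 2*M 2 0*M 3 1 + M 0 3*M 1 2*M 2 1*M 3 0 := by
  simp [Matrix.det_succ_row_zero, Fin.sum_univ_succ, Matrix.submatrix_apply, Fin.succAbove,
    show (Fin.succ 2 : Fin 4) = 3 from rfl, show (Fin.castSucc 2 : Fin 4) = 2 from rfl,
    show ((1 : Fin 4) < Fin.succ 2) from by decide]
  ring

set_option maxHeartbeats 4000000 in
set_option maxRecDepth 8000 in
/-- factorization of the characteristic polynomial of the
Jacobian of the (1B2D) link dynamics at a co-linear moving configuration. -/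
theorem stmt_16 (s t x y p q k l : ℝ) (hkl : k ^ 2 + l ^ 2 = 1)
    (A : Matrix (Fin 4) (Fin 4) ℝ)
    (hA : A = -(Matrix.diagonal ![(s + 1) * x, (s + 1) * x, (t + 1) * p, (t + 1) * p]) -
      !![(y - x) * k ^ 2, (y - x) * (k * l), p * l ^ 2, -(p * (k * l));
         (y - x) * (k * l), (y - x) * l ^ 2, -(p * (k * l)), p * k ^ 2;
         x * l ^ 2, -(x * (k * l)), (q - p) * k ^ 2, (q - p) * (k * l);
         -(x * (k * l)), x * k ^ 2, (q - p) * (k * l), (q - p) * l ^ 2]) :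
    A.charpoly = (X + C (p * t + q)) * (X + C (x * s + y)) *
      (X ^ 2 + C (p * (t + 1) + x * (s + 1)) * X +
        C (p * x * ((t + 1) * (s + 1) - 1))) := by
  subst hA
  set a := k ^ 2 with ha
  set b := l ^ 2 with hb
  set c := k * l with hc
  have hab : a + b = 1 := hkl
  have hc2 : c ^ 2 = a * b := by rw [ha, hb, hc]; ring
  have hC1 : (C c) ^ 2 = C a * C b := by rw [← map_pow, ← map_mul, hc2]
  have hC2 : C a + C b = (1 : ℝ[X]) := by rw [← map_add, hab, map_one]
  clear_value a b c
  rw [Matrix.charpoly, det_fin_four']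
  simp (config := { maxSteps := 10000000 }) only [Matrix.charmatrix_apply_eq,
    Matrix.charmatrix_apply_ne, Matrix.diagonal_apply_eq, Matrix.diagonal_apply_ne,
    Matrix.sub_apply, Matrix.neg_apply, Matrix.of_apply, Matrix.cons_val', Matrix.cons_val_zero,
    Matrix.cons_val_one, Matrix.head_cons, Matrix.empty_val', Matrix.cons_val_fin_one,
    Matrix.cons_val_two, Matrix.cons_val_three, Matrix.tail_cons, Matrix.head_fin_const,
    map_neg, map_sub, map_mul, map_add, map_pow, map_one, map_zero, neg_neg, neg_zero, zero_sub, sub_zero, ne_eq,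
    (by decide : ¬((0:Fin 4) = 1)), (by decide : ¬((0:Fin 4) = 2)),
    (by decide : ¬((0:Fin 4) = 3)), (by decide : ¬((1:Fin 4) = 0)),
    (by decide : ¬((1:Fin 4) = 2)), (by decide : ¬((1:Fin 4) = 3)),
    (by decide : ¬((2:Fin 4) = 0)), (by decide : ¬((2:Fin 4) = 1)),
    (by decide : ¬((2:Fin 4) = 3)), (by decide : ¬((3:Fin 4) = 0)),
    (by decide : ¬((3:Fin 4) = 1)), (by decide : ¬((3:Fin 4) = 2)),
    not_false_eq_true]
  linear_combination (((-1):ℝ[X])*(C q)^2*(X)^2 + (2:ℝ[X])*(C p)*(C q)*(X)^2 + ((-1):ℝ[X])*(C p)^2*(X)^2 + ((-1):ℝ[X])*(C y)*(C q)^2*(C b)*(X) + ((-1):ℝ[X])*(C y)*(C q)^2*(C a)*(X) + (2:ℝ[X])*(C y)*(C p)*(C q)*(C b)*(X) + (2:ℝ[X])*(C y)*(C p)*(C q)*(C a)*(X) + ((-1):ℝ[X])*(C y)*(C p)^2*(C b)*(X) + ((-1):ℝ[X])*(C y)*(C p)^2*(C a)*(X) + ((-1):ℝ[X])*(C y)^2*(X)^2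 + ((-1):ℝ[X])*(C y)^2*(C q)*(C b)*(X) + ((-1):ℝ[X])*(C y)^2*(C q)*(C a)*(X) + (1:ℝ[X])*(C y)^2*(C q)^2*(C c)^2 + ((-1):ℝ[X])*(C y)^2*(C q)^2*(C a)*(C b) + ((-2):ℝ[X])*(C y)^2*(C p)*(X) + (1:ℝ[X])*(C y)^2*(C p)*(C b)*(X) + (1:ℝ[X])*(C y)^2*(C p)*(C a)*(X) + ((-2):ℝ[X])*(C y)^2*(C p)*(C q)*(C c)^2 + ((-1):ℝ[X])*(C y)^2*(C p)*(C q)*(C b) + ((-1):ℝ[X])*(C y)^2*(C p)*(C q)*(C a) + (2:ℝ[X])*(C y)^2*(C p)*(C q)*(C a)*(C b) + ((-1):ℝ[X])*(C y)^2*(C p)^2 + (1:ℝ[X])*(C y)^2*(C p)^2*(C c)^2 + (1:ℝ[X])*(C y)^2*(C p)^2*(C b) + (1:ℝ[X])*(C y)^2*(C p)^2*(C a) + ((-1):ℝ[X])*(C y)^2*(C p)^2*(C a)*(C b) + ((-2):ℝ[X])*(C x)*(C q)^2*(X) + (1:ℝ[X])*(C x)*(C q)^2*(C b)*(X) + (1:ℝ[X])*(C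 x)*(C q)^2*(C a)*(X) + ((-2):ℝ[X])*(C x)*(C p)*(X)^2 + (4:ℝ[X])*(C x)*(C p)*(C q)*(X) + ((-5):ℝ[X])*(C x)*(C p)*(C q)*(C b)*(X) + ((-5):ℝ[X])*(C x)*(C p)*(C q)*(C a)*(X) + ((-4):ℝ[X])*(C x)*(C p)^2*(X) + (4:ℝ[X])*(C x)*(C p)^2*(C b)*(X) + (4:ℝ[X])*(C x)*(C p)^2*(C a)*(X) + (2:ℝ[X])*(C x)*(C y)*(X)^2 + (2:ℝ[X])*(C x)*(C y)*(C q)*(C b)*(X) + (2:ℝ[X])*(C x)*(C y)*(C q)*(C a)*(X) + ((-2):ℝ[X])*(C x)*(C y)*(C q)^2*(C c)^2 + ((-1):ℝ[X])*(C x)*(C y)*(C q)^2*(C b) + ((-1):ℝ[X])*(C x)*(C y)*(C q)^2*(C a) + (2:ℝ[X])*(C x)*(C y)*(C q)^2*(C a)*(C b) + (4:ℝ[X])*(C x)*(C y)*(C p)*(X) + ((-5):ℝ[X])*(C x)*(C y)*(C p)*(C b)*(X) + ((-5):ℝ[X])*(C x)*(C y)*(C p)*(C a)*(X) + (2:ℝ[X])*(C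 x)*(C y)*(C p)*(C q)*(C c)^2 + (4:ℝ[X])*(C x)*(C y)*(C p)*(C q)*(C b) + ((-4):ℝ[X])*(C x)*(C y)*(C p)*(C q)*(C b)^2 + (4:ℝ[X])*(C x)*(C y)*(C p)*(C q)*(C a) + ((-10):ℝ[X])*(C x)*(C y)*(C p)*(C q)*(C a)*(C b) + ((-4):ℝ[X])*(C x)*(C y)*(C p)*(C q)*(C a)^2 + (2:ℝ[X])*(C x)*(C y)*(C p)^2 + ((-6):ℝ[X])*(C x)*(C y)*(C p)^2*(C b) + (4:ℝ[X])*(C x)*(C y)*(C p)^2*(C b)^2 + ((-6):ℝ[X])*(C x)*(C y)*(C p)^2*(C a) + (8:ℝ[X])*(C x)*(C y)*(C p)^2*(C a)*(C b) + (4:ℝ[X])*(C x)*(C y)*(C p)^2*(C a)^2 + ((-1):ℝ[X])*(C x)^2*(X)^2 + ((-1):ℝ[X])*(C x)^2*(C q)*(C b)*(X) + ((-1):ℝ[X])*(C x)^2*(C q)*(C a)*(X) + ((-1):ℝ[X])*(C x)^2*(C q)^2 + (1:ℝ[X])*(C x)^2*(C q)^2*(C c)^2 + (1:ℝ[X])*(C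 x)^2*(C q)^2*(C b) + (1:ℝ[X])*(C x)^2*(C q)^2*(C a) + ((-1):ℝ[X])*(C x)^2*(C q)^2*(C a)*(C b) + ((-4):ℝ[X])*(C x)^2*(C p)*(X) + (4:ℝ[X])*(C x)^2*(C p)*(C b)*(X) + (4:ℝ[X])*(C x)^2*(C p)*(C a)*(X) + (2:ℝ[X])*(C x)^2*(C p)*(C q) + ((-6):ℝ[X])*(C x)^2*(C p)*(C q)*(C b) + (4:ℝ[X])*(C x)^2*(C p)*(C q)*(C b)^2 + ((-6):ℝ[X])*(C x)^2*(C p)*(C q)*(C a) + (8:ℝ[X])*(C x)^2*(C p)*(C q)*(C a)*(C b) + (4:ℝ[X])*(C x)^2*(C p)*(C q)*(C a)^2 + ((-4):ℝ[X])*(C x)^2*(C p)^2 + (8:ℝ[X])*(C x)^2*(C p)^2*(C b) + ((-4):ℝ[X])*(C x)^2*(C p)^2*(C b)^2 + (8:ℝ[X])*(C x)^2*(C p)^2*(C a) + ((-8):ℝ[X])*(C x)^2*(C p)^2*(C a)*(C b) + ((-4):ℝ[X])*(C x)^2*(C p)^2*(C a)^2 + ((-2):ℝ[X])*(C t)*(C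 y)^2*(C p)*(X) + ((-1):ℝ[X])*(C t)*(C y)^2*(C p)*(C q)*(C b) + ((-1):ℝ[X])*(C t)*(C y)^2*(C p)*(C q)*(C a) + ((-2):ℝ[X])*(C t)*(C y)^2*(C p)^2 + (1:ℝ[X])*(C t)*(C y)^2*(C p)^2*(C b) + (1:ℝ[X])*(C t)*(C y)^2*(C p)^2*(C a) + ((-2):ℝ[X])*(C t)*(C x)*(C p)^2*(X) + (4:ℝ[X])*(C t)*(C x)*(C y)*(C p)*(X) + (2:ℝ[X])*(C t)*(C x)*(C y)*(C p)*(C q)*(C b) + (2:ℝ[X])*(C t)*(C x)*(C y)*(C p)*(C q)*(C a) + (4:ℝ[X])*(C t)*(C x)*(C y)*(C p)^2 + ((-5):ℝ[X])*(C t)*(C x)*(C y)*(C p)^2*(C b) + ((-5):ℝ[X])*(C t)*(C x)*(C y)*(C p)^2*(C a) + ((-2):ℝ[X])*(C t)*(C x)^2*(C p)*(X) + ((-1):ℝ[X])*(C t)*(C x)^2*(C p)*(C q)*(C b) + ((-1):ℝ[X])*(C t)*(C x)^2*(C p)*(C q)*(C a) + ((-4):ℝ[X])*(C t)*(C x)^2*(C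 p)^2 + (4:ℝ[X])*(C t)*(C x)^2*(C p)^2*(C b) + (4:ℝ[X])*(C t)*(C x)^2*(C p)^2*(C a) + ((-1):ℝ[X])*(C t)^2*(C y)^2*(C p)^2 + (2:ℝ[X])*(C t)^2*(C x)*(C y)*(C p)^2 + ((-1):ℝ[X])*(C t)^2*(C x)^2*(C p)^2 + ((-2):ℝ[X])*(C s)*(C x)*(C q)^2*(X) + (4:ℝ[X])*(C s)*(C x)*(C p)*(C q)*(X) + ((-2):ℝ[X])*(C s)*(C x)*(C p)^2*(X) + ((-1):ℝ[X])*(C s)*(C x)*(C y)*(C q)^2*(C b) + ((-1):ℝ[X])*(C s)*(C x)*(C y)*(C q)^2*(C a) + (2:ℝ[X])*(C s)*(C x)*(C y)*(C p)*(C q)*(C b) + (2:ℝ[X])*(C s)*(C x)*(C y)*(C p)*(C q)*(C a) + ((-1):ℝ[X])*(C s)*(C x)*(C y)*(C p)^2*(C b) + ((-1):ℝ[X])*(C s)*(C x)*(C y)*(C p)^2*(C a) + ((-2):ℝ[X])*(C s)*(C x)^2*(C q)^2 + (1:ℝ[X])*(C s)*(C x)^2*(C q)^2*(C b) + (1:ℝ[X])*(C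 s)*(C x)^2*(C q)^2*(C a) + ((-2):ℝ[X])*(C s)*(C x)^2*(C p)*(X) + (4:ℝ[X])*(C s)*(C x)^2*(C p)*(C q) + ((-5):ℝ[X])*(C s)*(C x)^2*(C p)*(C q)*(C b) + ((-5):ℝ[X])*(C s)*(C x)^2*(C p)*(C q)*(C a) + ((-4):ℝ[X])*(C s)*(C x)^2*(C p)^2 + (4:ℝ[X])*(C s)*(C x)^2*(C p)^2*(C b) + (4:ℝ[X])*(C s)*(C x)^2*(C p)^2*(C a) + ((-2):ℝ[X])*(C s)*(C t)*(C x)^2*(C p)^2 + ((-1):ℝ[X])*(C s)^2*(C x)^2*(C q)^2 + (2:ℝ[X])*(C s)^2*(C x)^2*(C p)*(C q) + ((-1):ℝ[X])*(C s)^2*(C x)^2*(C p)^2) * hC1 + ((1:ℝ[X])*(C q)*(X)^3 + ((-1):ℝ[X])*(C p)*(X)^3 + (1:ℝ[X])*(C p)*(C q)*(X)^2 + ((-1):ℝ[X])*(C p)^2*(X)^2 + (1:ℝ[X])*(C y)*(X)^3 + (1:ℝ[X])*(C y)*(C q)*(X)^2 + (1:ℝ[X])*(C y)*(C q)*(C b)*(X)^2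 + (1:ℝ[X])*(C y)*(C q)*(C a)*(X)^2 + (1:ℝ[X])*(C y)*(C p)*(X)^2 + ((-1):ℝ[X])*(C y)*(C p)*(C b)*(X)^2 + ((-1):ℝ[X])*(C y)*(C p)*(C a)*(X)^2 + (1:ℝ[X])*(C y)*(C p)*(C q)*(X) + (1:ℝ[X])*(C y)*(C p)*(C q)*(C b)*(X) + (1:ℝ[X])*(C y)*(C p)*(C q)*(C a)*(X) + ((-1):ℝ[X])*(C y)*(C p)^2*(C b)*(X) + ((-1):ℝ[X])*(C y)*(C p)^2*(C a)*(X) + ((-1):ℝ[X])*(C x)*(X)^3 + (1:ℝ[X])*(C x)*(C q)*(X)^2 + ((-1):ℝ[X])*(C x)*(C q)*(C b)*(X)^2 + ((-1):ℝ[X])*(C x)*(C q)*(C a)*(X)^2 + ((-4):ℝ[X])*(C x)*(C p)*(X)^2 + ((-2):ℝ[X])*(C x)*(C p)*(C q)*(C b)*(X) + ((-1):ℝ[X])*(C x)*(C p)*(C q)*(C b)^2*(X) + ((-2):ℝ[X])*(C x)*(C p)*(C q)*(C a)*(X) + ((-2):ℝ[X])*(C x)*(C p)*(C q)*(C a)*(C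 b)*(X) + ((-1):ℝ[X])*(C x)*(C p)*(C q)*(C a)^2*(X) + ((-2):ℝ[X])*(C x)*(C p)^2*(X) + (1:ℝ[X])*(C x)*(C p)^2*(C b)*(X) + (1:ℝ[X])*(C x)*(C p)^2*(C b)^2*(X) + (1:ℝ[X])*(C x)*(C p)^2*(C a)*(X) + (2:ℝ[X])*(C x)*(C p)^2*(C a)*(C b)*(X) + (1:ℝ[X])*(C x)*(C p)^2*(C a)^2*(X) + (1:ℝ[X])*(C x)*(C y)*(X)^2 + (1:ℝ[X])*(C x)*(C y)*(C q)*(X) + (1:ℝ[X])*(C x)*(C y)*(C q)*(C b)*(X) + (1:ℝ[X])*(C x)*(C y)*(C q)*(C a)*(X) + ((-2):ℝ[X])*(C x)*(C y)*(C p)*(C b)*(X) + ((-1):ℝ[X])*(C x)*(C y)*(C p)*(C b)^2*(X) + ((-2):ℝ[X])*(C x)*(C y)*(C p)*(C a)*(X) + ((-2):ℝ[X])*(C x)*(C y)*(C p)*(C a)*(C b)*(X) + ((-1):ℝ[X])*(C x)*(C y)*(C p)*(C a)^2*(X) + ((-1):ℝ[X])*(C x)*(C y)*(C p)*(C q)*(C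 b)^2 + ((-1):ℝ[X])*(C x)*(C y)*(C p)*(C q)*(C b)^3 + ((-2):ℝ[X])*(C x)*(C y)*(C p)*(C q)*(C a)*(C b) + ((-3):ℝ[X])*(C x)*(C y)*(C p)*(C q)*(C a)*(C b)^2 + ((-1):ℝ[X])*(C x)*(C y)*(C p)*(C q)*(C a)^2 + ((-3):ℝ[X])*(C x)*(C y)*(C p)*(C q)*(C a)^2*(C b) + ((-1):ℝ[X])*(C x)*(C y)*(C p)*(C q)*(C a)^3 + ((-1):ℝ[X])*(C x)*(C y)*(C p)^2*(C b) + (1:ℝ[X])*(C x)*(C y)*(C p)^2*(C b)^3 + ((-1):ℝ[X])*(C x)*(C y)*(C p)^2*(C a) + (3:ℝ[X])*(C x)*(C y)*(C p)^2*(C a)*(C b)^2 + (3:ℝ[X])*(C x)*(C y)*(C p)^2*(C a)^2*(C b) + (1:ℝ[X])*(C x)*(C y)*(C p)^2*(C a)^3 + ((-1):ℝ[X])*(C x)^2*(X)^2 + ((-1):ℝ[X])*(C x)^2*(C q)*(C b)*(X) + ((-1):ℝ[X])*(C x)^2*(C q)*(C a)*(X) + ((-2):ℝ[X])*(C x)^2*(C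 p)*(X) + (1:ℝ[X])*(C x)^2*(C p)*(C b)*(X) + (1:ℝ[X])*(C x)^2*(C p)*(C b)^2*(X) + (1:ℝ[X])*(C x)^2*(C p)*(C a)*(X) + (2:ℝ[X])*(C x)^2*(C p)*(C a)*(C b)*(X) + (1:ℝ[X])*(C x)^2*(C p)*(C a)^2*(X) + ((-1):ℝ[X])*(C x)^2*(C p)*(C q)*(C b) + (1:ℝ[X])*(C x)^2*(C p)*(C q)*(C b)^3 + ((-1):ℝ[X])*(C x)^2*(C p)*(C q)*(C a) + (3:ℝ[X])*(C x)^2*(C p)*(C q)*(C a)*(C b)^2 + (3:ℝ[X])*(C x)^2*(C p)*(C q)*(C a)^2*(C b) + (1:ℝ[X])*(C x)^2*(C p)*(C q)*(C a)^3 + ((-1):ℝ[X])*(C x)^2*(C p)^2 + (1:ℝ[X])*(C x)^2*(C p)^2*(C b) + (1:ℝ[X])*(C x)^2*(C p)^2*(C b)^2 + ((-1):ℝ[X])*(C x)^2*(C p)^2*(C b)^3 + (1:ℝ[X])*(C x)^2*(C p)^2*(C a) + (2:ℝ[X])*(C x)^2*(C p)^2*(C a)*(C b) + ((-3):ℝ[X])*(C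 x)^2*(C p)^2*(C a)*(C b)^2 + (1:ℝ[X])*(C x)^2*(C p)^2*(C a)^2 + ((-3):ℝ[X])*(C x)^2*(C p)^2*(C a)^2*(C b) + ((-1):ℝ[X])*(C x)^2*(C p)^2*(C a)^3 + (1:ℝ[X])*(C t)*(C p)*(C q)*(X)^2 + ((-1):ℝ[X])*(C t)*(C p)^2*(X)^2 + (2:ℝ[X])*(C t)*(C y)*(C p)*(X)^2 + (1:ℝ[X])*(C t)*(C y)*(C p)*(C q)*(X) + (1:ℝ[X])*(C t)*(C y)*(C p)*(C q)*(C b)*(X) + (1:ℝ[X])*(C t)*(C y)*(C p)*(C q)*(C a)*(X) + (1:ℝ[X])*(C t)*(C y)*(C p)^2*(X) + ((-1):ℝ[X])*(C t)*(C y)*(C p)^2*(C b)*(X) + ((-1):ℝ[X])*(C t)*(C y)*(C p)^2*(C a)*(X) + ((-2):ℝ[X])*(C t)*(C x)*(C p)*(X)^2 + (1:ℝ[X])*(C t)*(C x)*(C p)*(C q)*(X) + ((-1):ℝ[X])*(C t)*(C x)*(C p)*(C q)*(C b)*(X) + ((-1):ℝ[X])*(C t)*(C x)*(C p)*(C q)*(C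 a)*(X) + ((-4):ℝ[X])*(C t)*(C x)*(C p)^2*(X) + (2:ℝ[X])*(C t)*(C x)*(C y)*(C p)*(X) + (1:ℝ[X])*(C t)*(C x)*(C y)*(C p)*(C q) + (1:ℝ[X])*(C t)*(C x)*(C y)*(C p)*(C q)*(C b) + (1:ℝ[X])*(C t)*(C x)*(C y)*(C p)*(C q)*(C a) + ((-2):ℝ[X])*(C t)*(C x)*(C y)*(C p)^2*(C b) + ((-1):ℝ[X])*(C t)*(C x)*(C y)*(C p)^2*(C b)^2 + ((-2):ℝ[X])*(C t)*(C x)*(C y)*(C p)^2*(C a) + ((-2):ℝ[X])*(C t)*(C x)*(C y)*(C p)^2*(C a)*(C b) + ((-1):ℝ[X])*(C t)*(C x)*(C y)*(C p)^2*(C a)^2 + ((-2):ℝ[X])*(C t)*(C x)^2*(C p)*(X) + ((-1):ℝ[X])*(C t)*(C x)^2*(C p)*(C q)*(C b) + ((-1):ℝ[X])*(C t)*(C x)^2*(C p)*(C q)*(C a) + ((-2):ℝ[X])*(C t)*(C x)^2*(C p)^2 + (1:ℝ[X])*(C t)*(C x)^2*(C p)^2*(C b) + (1:ℝ[X])*(C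 t)*(C x)^2*(C p)^2*(C b)^2 + (1:ℝ[X])*(C t)*(C x)^2*(C p)^2*(C a) + (2:ℝ[X])*(C t)*(C x)^2*(C p)^2*(C a)*(C b) + (1:ℝ[X])*(C t)*(C x)^2*(C p)^2*(C a)^2 + (1:ℝ[X])*(C t)^2*(C y)*(C p)^2*(X) + ((-1):ℝ[X])*(C t)^2*(C x)*(C p)^2*(X) + (1:ℝ[X])*(C t)^2*(C x)*(C y)*(C p)^2 + ((-1):ℝ[X])*(C t)^2*(C x)^2*(C p)^2 + (2:ℝ[X])*(C s)*(C x)*(C q)*(X)^2 + ((-2):ℝ[X])*(C s)*(C x)*(C p)*(X)^2 + (2:ℝ[X])*(C s)*(C x)*(C p)*(C q)*(X) + ((-2):ℝ[X])*(C s)*(C x)*(C p)^2*(X) + (1:ℝ[X])*(C s)*(C x)*(C y)*(X)^2 + (1:ℝ[X])*(C s)*(C x)*(C y)*(C q)*(X) + (1:ℝ[X])*(C s)*(C x)*(C y)*(C q)*(C b)*(X) + (1:ℝ[X])*(C s)*(C x)*(C y)*(C q)*(C a)*(X) + (1:ℝ[X])*(C s)*(C x)*(C y)*(C p)*(X) +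 ((-1):ℝ[X])*(C s)*(C x)*(C y)*(C p)*(C b)*(X) + ((-1):ℝ[X])*(C s)*(C x)*(C y)*(C p)*(C a)*(X) + (1:ℝ[X])*(C s)*(C x)*(C y)*(C p)*(C q) + (1:ℝ[X])*(C s)*(C x)*(C y)*(C p)*(C q)*(C b) + (1:ℝ[X])*(C s)*(C x)*(C y)*(C p)*(C q)*(C a) + ((-1):ℝ[X])*(C s)*(C x)*(C y)*(C p)^2*(C b) + ((-1):ℝ[X])*(C s)*(C x)*(C y)*(C p)^2*(C a) + ((-1):ℝ[X])*(C s)*(C x)^2*(X)^2 + (1:ℝ[X])*(C s)*(C x)^2*(C q)*(X) + ((-1):ℝ[X])*(C s)*(C x)^2*(C q)*(C b)*(X) + ((-1):ℝ[X])*(C s)*(C x)^2*(C q)*(C a)*(X) + ((-4):ℝ[X])*(C s)*(C x)^2*(C p)*(X) + ((-2):ℝ[X])*(C s)*(C x)^2*(C p)*(C q)*(C b) + ((-1):ℝ[X])*(C s)*(C x)^2*(C p)*(C q)*(C b)^2 + ((-2):ℝ[X])*(C s)*(C x)^2*(C p)*(C q)*(C a) + ((-2):ℝ[X])*(C s)*(C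 x)^2*(C p)*(C q)*(C a)*(C b) + ((-1):ℝ[X])*(C s)*(C x)^2*(C p)*(C q)*(C a)^2 + ((-2):ℝ[X])*(C s)*(C x)^2*(C p)^2 + (1:ℝ[X])*(C s)*(C x)^2*(C p)^2*(C b) + (1:ℝ[X])*(C s)*(C x)^2*(C p)^2*(C b)^2 + (1:ℝ[X])*(C s)*(C x)^2*(C p)^2*(C a) + (2:ℝ[X])*(C s)*(C x)^2*(C p)^2*(C a)*(C b) + (1:ℝ[X])*(C s)*(C x)^2*(C p)^2*(C a)^2 + (2:ℝ[X])*(C s)*(C t)*(C x)*(C p)*(C q)*(X) + ((-2):ℝ[X])*(C s)*(C t)*(C x)*(C p)^2*(X) + (2:ℝ[X])*(C s)*(C t)*(C x)*(C y)*(C p)*(X) + (1:ℝ[X])*(C s)*(C t)*(C x)*(C y)*(C p)*(C q) + (1:ℝ[X])*(C s)*(C t)*(C x)*(C y)*(C p)*(C q)*(C b) + (1:ℝ[X])*(C s)*(C t)*(C x)*(C y)*(C p)*(C q)*(C a) + (1:ℝ[X])*(C s)*(C t)*(C x)*(C y)*(C p)^2 + ((-1):ℝ[X])*(C s)*(C t)*(C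 x)*(C y)*(C p)^2*(C b) + ((-1):ℝ[X])*(C s)*(C t)*(C x)*(C y)*(C p)^2*(C a) + ((-2):ℝ[X])*(C s)*(C t)*(C x)^2*(C p)*(X) + (1:ℝ[X])*(C s)*(C t)*(C x)^2*(C p)*(C q) + ((-1):ℝ[X])*(C s)*(C t)*(C x)^2*(C p)*(C q)*(C b) + ((-1):ℝ[X])*(C s)*(C t)*(C x)^2*(C p)*(C q)*(C a) + ((-4):ℝ[X])*(C s)*(C t)*(C x)^2*(C p)^2 + (1:ℝ[X])*(C s)*(C t)^2*(C x)*(C y)*(C p)^2 + ((-1):ℝ[X])*(C s)*(C t)^2*(C x)^2*(C p)^2 + (1:ℝ[X])*(C s)^2*(C x)^2*(C q)*(X) + ((-1):ℝ[X])*(C s)^2*(C x)^2*(C p)*(X) + (1:ℝ[X])*(C s)^2*(C x)^2*(C p)*(C q) + ((-1):ℝ[X])*(C s)^2*(C x)^2*(C p)^2 + (1:ℝ[X])*(C s)^2*(C t)*(C x)^2*(C p)*(C q) + ((-1):ℝ[X])*(C s)^2*(C t)*(C x)^2*(C p)^2) * hC2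
end

section
/- Let x, y, p, q > 0 be real numbers, let (k,l) ∈ ℝ² be a unit vector (k² + l² = 1), and let D be a real number with 0 < D < 2. Let (s,t) be one of the four pairs: (−2+D, −2+D), (−2−D, −2−D), (D, −D), (−D, D). Then the 4×4 real matrix A_M = −diag((s+1)x, (s+1)x, (t+1)p, (t+1)p) − N, where N has rows [(y−x)k², (y−x)kl, p·l², −p·kl], [(y−x)kl, (y−x)l², −p·kl, p·k²], [x·l², −x·kl, (q−p)k², (q−p)kl], [−x·kl, x·k², (q−p)kl, (q−p)l²], has a complex eigenvalue with positive real part; in particular A_M is not Hurwitz, so every co-linear moving configuration of the (1B2D) setup is unstable. -/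
open Matrix Polynomial

lemma my_eval_charpoly {n : Type*} [DecidableEq n] [Fintype n] {R : Type*} [CommRing R]
    (M : Matrix n n R) (μ : R) :
    M.charpoly.eval μ = (μ • (1 : Matrix n n R) - M).det := by
  rw [Matrix.charpoly, ← Polynomial.coe_evalRingHom, RingHom.map_det]
  congr 1
  ext i j
  by_cases h : i = j
  · subst h; simp [Matrix.charmatrix_apply_eq, Matrix.one_apply, Matrix.smul_apply]
  · simp [Matrix.charmatrix_apply_ne _ _ _ h, Matrix.one_apply, h, Matrix.smul_apply]

lemma my_quad_root (T Δ : ℝ) (h : Δ < 0 ∨ (0 < Δ ∧ 0 < T)) :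
    ∃ μ : ℂ, μ ^ 2 - (T : ℂ) * μ + (Δ : ℂ) = 0 ∧ 0 < μ.re := by
  rcases le_or_gt 0 (T ^ 2 - 4 * Δ) with hd | hd
  · set r := Real.sqrt (T ^ 2 - 4 * Δ) with hrdef
    have hr2 : r ^ 2 = T ^ 2 - 4 * Δ := Real.sq_sqrt hd
    have hr0 : 0 ≤ r := Real.sqrt_nonneg _
    have hμ : ((T + r) / 2) ^ 2 - T * ((T + r) / 2) + Δ = 0 := by
      linear_combination hr2 / 4
    refine ⟨(((T + r) / 2 : ℝ) : ℂ), ?_, ?_⟩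
    · push_cast
      have h' := congrArg (fun z : ℝ => (z : ℂ)) hμ
      simp only [Complex.ofReal_add, Complex.ofReal_sub, Complex.ofReal_mul, Complex.ofReal_pow, Complex.ofReal_div, Complex.ofReal_zero, Complex.ofReal_ofNat] at h' ⊢
      linear_combination h'
    · simp only [Complex.ofReal_re]
      rcases h with h1 | ⟨h1, h2⟩
      · nlinarith [sq_nonneg (r + T), sq_nonneg (r - T)]
      · nlinarith
  · have hT : 0 < T := by
      rcases h with h1 | ⟨h1, h2⟩
      · nlinarith [sq_nonneg T]
      · exact h2
    set r := Real.sqrt (4 * Δ - T ^ 2) with hrdef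
    have hr2 : r ^ 2 = 4 * Δ - T ^ 2 := Real.sq_sqrt (by linarith)
    have hr2c : ((r : ℂ)) ^ 2 = 4 * (Δ : ℂ) - (T : ℂ) ^ 2 := by exact_mod_cast congrArg (fun z : ℝ => (z : ℂ)) hr2
    refine ⟨(T / 2 : ℝ) + (r / 2 : ℝ) * Complex.I, ?_, ?_⟩
    · push_cast
      linear_combination ((r : ℂ) ^ 2 / 4) * Complex.I_sq - (1 / 4 : ℂ) * hr2c
    · simp [hT]

/-- at each of the four co-linear moving configurations of the
(1B2D) setup, the Jacobian has a complex eigenvalue with positive real part; in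
particular it is not Hurwitz, so every co-linear moving configuration is
unstable. -/
theorem stmt_17 (x y p q k l D : ℝ)
    (hx : 0 < x) (hy : 0 < y) (hp : 0 < p) (hq : 0 < q)
    (hkl : k ^ 2 + l ^ 2 = 1) (hD0 : 0 < D) (hD2 : D < 2)
    (s t : ℝ)
    (hst : (s = -2 + D ∧ t = -2 + D) ∨ (s = -2 - D ∧ t = -2 - D) ∨
           (s = D ∧ t = -D) ∨ (s = -D ∧ t = D))
    (A : Matrix (Fin 4) (Fin 4) ℝ)
    (hA : A = -(Matrix.diagonal ![(s + 1) * x, (s + 1) * x, (t + 1) * p, (t + 1) * p]) -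
      !![(y - x) * k ^ 2, (y - x) * (k * l), p * l ^ 2, -(p * (k * l));
         (y - x) * (k * l), (y - x) * l ^ 2, -(p * (k * l)), p * k ^ 2;
         x * l ^ 2, -(x * (k * l)), (q - p) * k ^ 2, (q - p) * (k * l);
         -(x * (k * l)), x * k ^ 2, (q - p) * (k * l), (q - p) * l ^ 2]) :
    ∃ μ : ℂ, ((A.map (algebraMap ℝ ℂ)).charpoly).IsRoot μ ∧ 0 < μ.re := by
  have hxp : 0 < x * p := mul_pos hx hp
  have hcase : ((s + 1) * (t + 1) * x * p - p * x < 0) ∨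
      (0 < (s + 1) * (t + 1) * x * p - p * x ∧ 0 < -(s + 1) * x - (t + 1) * p) := by
    rcases hst with ⟨hs, ht⟩ | ⟨hs, ht⟩ | ⟨hs, ht⟩ | ⟨hs, ht⟩ <;> subst hs <;> subst ht
    · left; nlinarith [mul_pos hxp (mul_pos hD0 (by linarith : (0:ℝ) < 2 - D))]
    · right
      constructor
      · nlinarith [mul_pos hxp (mul_pos hD0 (by linarith : (0:ℝ) < 2 + D))]
      · nlinarith [mul_pos hx hD0, mul_pos hp hD0]
    · left; nlinarith [mul_pos hxp (mul_pos hD0 hD0)]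
    · left; nlinarith [mul_pos hxp (mul_pos hD0 hD0)]
  obtain ⟨μ, hquad, hre⟩ := my_quad_root (-(s + 1) * x - (t + 1) * p)
    ((s + 1) * (t + 1) * x * p - p * x) hcase
  push_cast at hquad
  have hklc : ((k : ℂ)) ^ 2 + ((l : ℂ)) ^ 2 = 1 := by exact_mod_cast congrArg (fun z : ℝ => (z : ℂ)) hkl
  set β : ℂ := μ + ((s : ℂ) + 1) * (x : ℂ) with hβ
  set v : Fin 4 → ℂ := ![-(l : ℂ) * (-(p : ℂ)), (k : ℂ) * (-(p : ℂ)), -(l : ℂ) * β, (k : ℂ) * β]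
    with hv
  have hvne : v ≠ 0 := by
    intro h0
    have h1 := congrFun h0 0
    have h2 := congrFun h0 1
    simp [hv] at h1 h2
    have hpC : ((p : ℂ)) ≠ 0 := by exact_mod_cast hp.ne'
    rcases h1 with h1 | h1
    · rcases h2 with h2 | h2
      · rw [h2, h1] at hkl; norm_num at hkl
      · exact hp.ne' h2
    · exact hp.ne' h1
  have hmul : (μ • (1 : Matrix (Fin 4) (Fin 4) ℂ) - A.map (algebraMap ℝ ℂ)) *ᵥ v = 0 := by
    subst hA
    funext i
    have hsimp : True := trivial
    fin_cases i
    · simp [Matrix.mulVec, dotProduct, Fin.sum_univ_four, hv, hβ,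
        Matrix.sub_apply, Matrix.smul_apply, Matrix.one_apply, Matrix.map_apply,
        Matrix.neg_apply, Matrix.diagonal_apply, Pi.zero_apply]
      push_cast
      linear_combination (-((p:ℂ) * (l:ℂ) * (μ + ((s:ℂ) + 1) * (x:ℂ)))) * hklc
    · simp [Matrix.mulVec, dotProduct, Fin.sum_univ_four, hv, hβ,
        Matrix.sub_apply, Matrix.smul_apply, Matrix.one_apply, Matrix.map_apply,
        Matrix.neg_apply, Matrix.diagonal_apply, Pi.zero_apply]
      push_cast
      linear_combination ((p:ℂ) * (k:ℂ) * (μ + ((s:ℂ) + 1) * (x:ℂ))) * hklc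
    · simp [Matrix.mulVec, dotProduct, Fin.sum_univ_four, hv, hβ,
        Matrix.sub_apply, Matrix.smul_apply, Matrix.one_apply, Matrix.map_apply,
        Matrix.neg_apply, Matrix.diagonal_apply, Pi.zero_apply]
      push_cast
      linear_combination ((x:ℂ) * (l:ℂ) * (p:ℂ)) * hklc + (-(l:ℂ)) * hquad
    · simp [Matrix.mulVec, dotProduct, Fin.sum_univ_four, hv, hβ,
        Matrix.sub_apply, Matrix.smul_apply, Matrix.one_apply, Matrix.map_apply,
        Matrix.neg_apply, Matrix.diagonal_apply, Pi.zero_apply]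
      push_cast
      linear_combination (-((x:ℂ) * (k:ℂ) * (p:ℂ))) * hklc + ((k:ℂ)) * hquad
  have hdet : (μ • (1 : Matrix (Fin 4) (Fin 4) ℂ) - A.map (algebraMap ℝ ℂ)).det = 0 :=
    Matrix.exists_mulVec_eq_zero_iff.mp ⟨v, hvne, hmul⟩
  exact ⟨μ, by rw [Polynomial.IsRoot, my_eval_charpoly]; exact hdet, hre⟩
end

section
/- Let K_d, K_b > 0, set R = K_b/K_d and d̂ = √3·(R/2)^(1/3), and define h(ξ) = 2K_d·ξ² − K_b/ξ for ξ > 0. Suppose d* ≥ d̂ and let ξ be the largest real root of the cubic ξ³ − (d*)²·ξ + R = 0. Then ξ > 0, and: (i) if d* = d̂ then ξ = (R/2)^(1/3) and h(ξ) = 0; (ii) if d* > d̂ then ξ > (R/2)^(1/3) and h(ξ) > 0. -/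
set_option maxHeartbeats 1000000 in
/-- properties of `h(ξ) = 2K_d·ξ² − K_b/ξ` at the largest real
root `ξ` of the cubic `ξ³ − (d*)²·ξ + R = 0` when `d* ≥ d̂ = √3·(R/2)^(1/3)`. -/
theorem stmt_19 (Kd Kb dstar ξ : ℝ) (hKd : 0 < Kd) (hKb : 0 < Kb)
    (R : ℝ) (hR : R = Kb / Kd)
    (dhat : ℝ) (hdhat : dhat = Real.sqrt 3 * (R / 2) ^ ((1 : ℝ) / 3))
    (hds : dhat ≤ dstar)
    (hroot : ξ ^ 3 - dstar ^ 2 * ξ + R = 0)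
    (hmax : ∀ η : ℝ, η ^ 3 - dstar ^ 2 * η + R = 0 → η ≤ ξ) :
    0 < ξ ∧
    (dstar = dhat → ξ = (R / 2) ^ ((1 : ℝ) / 3) ∧ 2 * Kd * ξ ^ 2 - Kb / ξ = 0) ∧
    (dhat < dstar → (R / 2) ^ ((1 : ℝ) / 3) < ξ ∧ 0 < 2 * Kd * ξ ^ 2 - Kb / ξ) := by
  have hRpos : 0 < R := by rw [hR]; positivity
  set c : ℝ := (R / 2) ^ ((1 : ℝ) / 3) with hc
  have hcpos : 0 < c := Real.rpow_pos_of_pos (by linarith) _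
  have hc3 : c ^ 3 = R / 2 := by
    rw [hc, ← Real.rpow_natCast ((R / 2) ^ ((1 : ℝ) / 3)) 3,
      ← Real.rpow_mul (by linarith)]
    norm_num
  clear_value c
  have hs3 : Real.sqrt 3 ^ 2 = 3 := Real.sq_sqrt (by norm_num)
  have hdhat2 : dhat ^ 2 = 3 * c ^ 2 := by
    rw [hdhat, mul_pow, hs3]
  have hdhatpos : 0 < dhat := by
    rw [hdhat]; positivity
  have hdpos : 0 < dstar := lt_of_lt_of_le hdhatpos hds
  have hd2 : 3 * c ^ 2 ≤ dstar ^ 2 := by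
    rw [← hdhat2]; exact pow_le_pow_left₀ hdhatpos.le hds 2
  -- f(c) ≤ 0
  have hfc : c ^ 3 - dstar ^ 2 * c + R ≤ 0 := by nlinarith [hcpos]
  -- upper point
  set t : ℝ := c + dstar ^ 2 + 1 with ht
  have htgt : 1 < t := by nlinarith [hcpos, sq_nonneg dstar]
  have htpos : 0 < t := lt_trans one_pos htgt
  have h1 : dstar ^ 2 ≤ t := by nlinarith [hcpos]
  have h2 : t ≤ t ^ 2 := by nlinarith
  have hft : 0 ≤ t ^ 3 - dstar ^ 2 * t + R := by
    nlinarith [mul_nonneg htpos.le (sub_nonneg.mpr (le_trans h1 h2))]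
  have hct : c ≤ t := by nlinarith [sq_nonneg dstar]
  -- IVT: root η ∈ [c, t]
  have hcont : ContinuousOn (fun x : ℝ => x ^ 3 - dstar ^ 2 * x + R) (Set.Icc c t) := by
    fun_prop
  obtain ⟨η, hηmem, hηval⟩ := intermediate_value_Icc hct hcont
    (Set.mem_Icc.mpr ⟨hfc, hft⟩)
  have hηroot : η ^ 3 - dstar ^ 2 * η + R = 0 := hηval
  have hcξ : c ≤ ξ := le_trans hηmem.1 (hmax η hηroot)
  have hξpos : 0 < ξ := lt_of_lt_of_le hcpos hcξ
  have hKbR : Kb = Kd * R := by rw [hR]; field_simp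
  refine ⟨hξpos, ?_, ?_⟩
  · intro heq
    -- dstar = dhat, so dstar² = 3c², cubic factors as (ξ-c)²(ξ+2c)
    have hd2eq : dstar ^ 2 = 3 * c ^ 2 := by rw [heq, hdhat2]
    have hfac : (ξ - c) ^ 2 * (ξ + 2 * c) = 0 := by
      have h2c3 : 2 * c ^ 3 = R := by rw [hc3]; ring
      linear_combination hroot + ξ * hd2eq + h2c3
    have hξc : ξ = c := by
      rcases mul_eq_zero.mp hfac with h | h
      · rw [pow_two] at h
        have := mul_self_eq_zero.mp h
        linarith
      · nlinarith
    refine ⟨hξc, ?_⟩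
    rw [hξc]
    have : 2 * Kd * c ^ 2 - Kb / c = (2 * Kd * c ^ 3 - Kb) / c := by
      field_simp
    rw [this, hc3, hKbR]
    field_simp
    ring
  · intro hlt
    have hd2lt : 3 * c ^ 2 < dstar ^ 2 := by
      rw [← hdhat2]
      exact pow_lt_pow_left₀ hlt hdhatpos.le (by norm_num)
    have hξne : ξ ≠ c := by
      intro h
      rw [h] at hroot
      nlinarith [hcpos]
    have hcξ' : c < ξ := lt_of_le_of_ne hcξ (Ne.symm hξne)
    refine ⟨hcξ', ?_⟩
    have hξ3 : R / 2 < ξ ^ 3 := by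
      rw [← hc3]; exact pow_lt_pow_left₀ hcξ' hcpos.le (by norm_num)
    have : 2 * Kd * ξ ^ 2 - Kb / ξ = (2 * Kd * ξ ^ 3 - Kb) / ξ := by
      field_simp
    rw [this]
    apply div_pos _ hξpos
    rw [hKbR]
    nlinarith
end
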